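/- arXiv:2212.07974 — 4 statements merged into one kernel-verified Lean document; each statement's English description precedes it below -/
import Mathlib

section
/- Consider the function ρ(a) = 1/Γ(1-2a)² − 1/(Γ(1-a)·Γ(1-3a)) for a ∈ (0,1), where at points where the Gamma function has a pole the corresponding reciprocal term is interpreted as 0. Then there exists a unique α_* ∈ (0,1) with ρ(α_*) = 0; moreover α_* ∈ (2/3, 4/5), ρ(a) > 0 for all a ∈ (0, α_*), and ρ(a) < 0 for all a ∈ (α_*, 1). -/
open Real Finset Filter Topology

/-- The function `ρ(a) = 1/Γ(1-2a)² − 1/(Γ(1-a)Γ(1-3a))`. In Mathlib's convention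
`Real.Gamma` vanishes at nonpositive integers and `1/0 = 0`, so the reciprocal terms
vanish at the poles of the classical Gamma function. -/
noncomputable def rhoFn (a : ℝ) : ℝ :=
  1 / Real.Gamma (1 - 2 * a) ^ 2 - 1 / (Real.Gamma (1 - a) * Real.Gamma (1 - 3 * a))

noncomputable def gp (s : ℝ) (n : ℕ) : ℝ := ∏ j ∈ Finset.range (n+1), (s + j)

lemma gp_pos {s : ℝ} (hs : 0 < s) (n : ℕ) : 0 < gp s n :=
  Finset.prod_pos (fun j _ => by positivity)

lemma gammaSeq_eq (s : ℝ) (n : ℕ) : Real.GammaSeq s n = (n:ℝ)^s * n.factorial / gp s n := rfl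

lemma gamma_prod_le (c u₁ u₂ u₃ u₄ w₁ w₂ w₃ w₄ : ℝ) (hc : 0 ≤ c)
    (hu₁ : 0 < u₁) (hu₂ : 0 < u₂) (hu₃ : 0 < u₃) (hu₄ : 0 < u₄)
    (hw₁ : 0 < w₁) (hw₂ : 0 < w₂) (hw₃ : 0 < w₃) (hw₄ : 0 < w₄)
    (hsum : u₁ + u₂ + u₃ + u₄ = w₁ + w₂ + w₃ + w₄)
    (hg : ∀ n : ℕ, c * (gp w₁ n * gp w₂ n * gp w₃ n * gp w₄ n) ≤
      gp u₁ n * gp u₂ n * gp u₃ n * gp u₄ n) :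
    c * (Gamma u₁ * Gamma u₂ * Gamma u₃ * Gamma u₄) ≤
      Gamma w₁ * Gamma w₂ * Gamma w₃ * Gamma w₄ := by
  have hA : Tendsto (fun n => c * (Real.GammaSeq u₁ n * Real.GammaSeq u₂ n *
      Real.GammaSeq u₃ n * Real.GammaSeq u₄ n)) atTop
      (𝓝 (c * (Gamma u₁ * Gamma u₂ * Gamma u₃ * Gamma u₄))) :=
    ((((Real.GammaSeq_tendsto_Gamma u₁).mul (Real.GammaSeq_tendsto_Gamma u₂)).mul
      (Real.GammaSeq_tendsto_Gamma u₃)).mul (Real.GammaSeq_tendsto_Gamma u₄)).const_mul c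
  have hB : Tendsto (fun n => Real.GammaSeq w₁ n * Real.GammaSeq w₂ n *
      Real.GammaSeq w₃ n * Real.GammaSeq w₄ n) atTop
      (𝓝 (Gamma w₁ * Gamma w₂ * Gamma w₃ * Gamma w₄)) :=
    (((Real.GammaSeq_tendsto_Gamma w₁).mul (Real.GammaSeq_tendsto_Gamma w₂)).mul
      (Real.GammaSeq_tendsto_Gamma w₃)).mul (Real.GammaSeq_tendsto_Gamma w₄)
  refine le_of_tendsto_of_tendsto hA hB ?_
  filter_upwards [eventually_ge_atTop 1] with n hn
  have hnp : (0:ℝ) < n := by exact_mod_cast hn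
  have hfac : (0:ℝ) < (n.factorial : ℝ) := by exact_mod_cast n.factorial_pos
  have hDu : 0 < gp u₁ n * gp u₂ n * gp u₃ n * gp u₄ n := by
    have := gp_pos hu₁ n; have := gp_pos hu₂ n; have := gp_pos hu₃ n; have := gp_pos hu₄ n
    positivity
  have hDw : 0 < gp w₁ n * gp w₂ n * gp w₃ n * gp w₄ n := by
    have := gp_pos hw₁ n; have := gp_pos hw₂ n; have := gp_pos hw₃ n; have := gp_pos hw₄ n
    positivity
  have keyu : Real.GammaSeq u₁ n * Real.GammaSeq u₂ n * Real.GammaSeq u₃ n *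
      Real.GammaSeq u₄ n = ((n:ℝ)^(u₁+u₂+u₃+u₄) * (n.factorial:ℝ)^4) /
      (gp u₁ n * gp u₂ n * gp u₃ n * gp u₄ n) := by
    simp only [gammaSeq_eq]
    rw [Real.rpow_add hnp, Real.rpow_add hnp, Real.rpow_add hnp]
    ring
  have keyw : Real.GammaSeq w₁ n * Real.GammaSeq w₂ n * Real.GammaSeq w₃ n *
      Real.GammaSeq w₄ n = ((n:ℝ)^(u₁+u₂+u₃+u₄) * (n.factorial:ℝ)^4) /
      (gp w₁ n * gp w₂ n * gp w₃ n * gp w₄ n) := by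
    simp only [gammaSeq_eq, hsum]
    rw [Real.rpow_add hnp, Real.rpow_add hnp, Real.rpow_add hnp]
    ring
  simp only [keyu, keyw]
  have hN : 0 < (n:ℝ)^(u₁+u₂+u₃+u₄) * (n.factorial:ℝ)^4 := by positivity
  rw [show c * (((n:ℝ)^(u₁+u₂+u₃+u₄) * (n.factorial:ℝ)^4) /
      (gp u₁ n * gp u₂ n * gp u₃ n * gp u₄ n)) =
      (c * ((n:ℝ)^(u₁+u₂+u₃+u₄) * (n.factorial:ℝ)^4)) /
      (gp u₁ n * gp u₂ n * gp u₃ n * gp u₄ n) by ring,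
    div_le_div_iff₀ hDu hDw]
  nlinarith [mul_le_mul_of_nonneg_left (hg n) hN.le]

lemma hg_of_le {u₁ u₂ u₃ u₄ w₁ w₂ w₃ w₄ : ℝ}
    (hu₁ : 0 < u₁) (hu₂ : 0 < u₂) (hu₃ : 0 < u₃) (hu₄ : 0 < u₄)
    (hw₁ : 0 < w₁) (hw₂ : 0 < w₂) (hw₃ : 0 < w₃) (hw₄ : 0 < w₄)
    (hk : ∀ x : ℝ, 1 ≤ x → (w₁+x)*(w₂+x)*(w₃+x)*(w₄+x) ≤ (u₁+x)*(u₂+x)*(u₃+x)*(u₄+x))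
    (n : ℕ) :
    (u₁*u₂*u₃*u₄) * (gp w₁ n * gp w₂ n * gp w₃ n * gp w₄ n) ≤
    (w₁*w₂*w₃*w₄) * (gp u₁ n * gp u₂ n * gp u₃ n * gp u₄ n) := by
  have hW : gp w₁ n * gp w₂ n * gp w₃ n * gp w₄ n =
      ∏ j ∈ Finset.range (n+1), ((w₁+(j:ℝ))*(w₂+(j:ℝ))*(w₃+(j:ℝ))*(w₄+(j:ℝ))) := by
    simp only [gp, ← Finset.prod_mul_distrib]
  have hU : gp u₁ n * gp u₂ n * gp u₃ n * gp u₄ n =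
      ∏ j ∈ Finset.range (n+1), ((u₁+(j:ℝ))*(u₂+(j:ℝ))*(u₃+(j:ℝ))*(u₄+(j:ℝ))) := by
    simp only [gp, ← Finset.prod_mul_distrib]
  rw [hW, hU, Finset.prod_range_succ', Finset.prod_range_succ']
  push_cast
  simp only [add_zero]
  have hprod : ∏ j ∈ Finset.range n, ((w₁+((j:ℝ)+1))*(w₂+((j:ℝ)+1))*(w₃+((j:ℝ)+1))*(w₄+((j:ℝ)+1)))
      ≤ ∏ j ∈ Finset.range n, ((u₁+((j:ℝ)+1))*(u₂+((j:ℝ)+1))*(u₃+((j:ℝ)+1))*(u₄+((j:ℝ)+1))) := by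
    apply Finset.prod_le_prod
    · intro j _
      have : (0:ℝ) ≤ (j:ℝ) := Nat.cast_nonneg j
      positivity
    · intro j _
      exact hk ((j:ℝ)+1) (by linarith [Nat.cast_nonneg (α := ℝ) j])
  have h1 : (0:ℝ) ≤ (u₁*u₂*u₃*u₄) * (w₁*w₂*w₃*w₄) := by positivity
  nlinarith [mul_le_mul_of_nonneg_left hprod h1]

lemma gamma4_lt {u₁ u₂ u₃ u₄ w₁ w₂ w₃ w₄ : ℝ}
    (hu₁ : 0 < u₁) (hu₂ : 0 < u₂) (hu₃ : 0 < u₃) (hu₄ : 0 < u₄)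
    (hw₁ : 0 < w₁) (hw₂ : 0 < w₂) (hw₃ : 0 < w₃) (hw₄ : 0 < w₄)
    (hsum : u₁ + u₂ + u₃ + u₄ = w₁ + w₂ + w₃ + w₄)
    (hk : ∀ x : ℝ, 1 ≤ x → (w₁+x)*(w₂+x)*(w₃+x)*(w₄+x) ≤ (u₁+x)*(u₂+x)*(u₃+x)*(u₄+x))
    (h0 : w₁*w₂*w₃*w₄ < u₁*u₂*u₃*u₄) :
    Gamma u₁ * Gamma u₂ * Gamma u₃ * Gamma u₄ < Gamma w₁ * Gamma w₂ * Gamma w₃ * Gamma w₄ := by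
  have hWp : 0 < w₁*w₂*w₃*w₄ := by positivity
  set c := (u₁*u₂*u₃*u₄)/(w₁*w₂*w₃*w₄) with hcdef
  have hc1 : 1 < c := (one_lt_div hWp).mpr h0
  have hle : c * (Gamma u₁ * Gamma u₂ * Gamma u₃ * Gamma u₄) ≤
      Gamma w₁ * Gamma w₂ * Gamma w₃ * Gamma w₄ := by
    apply gamma_prod_le c u₁ u₂ u₃ u₄ w₁ w₂ w₃ w₄ (by positivity)
      hu₁ hu₂ hu₃ hu₄ hw₁ hw₂ hw₃ hw₄ hsum
    intro n
    rw [hcdef, div_mul_eq_mul_div, div_le_iff₀ hWp]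
    nlinarith [hg_of_le hu₁ hu₂ hu₃ hu₄ hw₁ hw₂ hw₃ hw₄ hk n]
  have hGu : 0 < Gamma u₁ * Gamma u₂ * Gamma u₃ * Gamma u₄ := by
    have := Real.Gamma_pos_of_pos hu₁; have := Real.Gamma_pos_of_pos hu₂
    have := Real.Gamma_pos_of_pos hu₃; have := Real.Gamma_pos_of_pos hu₄
    positivity
  nlinarith

lemma Gamma_sq_mean_lt {x y : ℝ} (hx : 0 < x) (hy : 0 < y) (hne : x ≠ y) :
    Gamma ((x+y)/2) ^ 2 < Gamma x * Gamma y := by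
  have hm : 0 < (x+y)/2 := by linarith
  have h := gamma4_lt (u₁ := (x+y)/2) (u₂ := (x+y)/2) (u₃ := 1) (u₄ := 1)
      (w₁ := x) (w₂ := y) (w₃ := 1) (w₄ := 1) hm hm one_pos one_pos hx hy one_pos one_pos
      (by ring) ?_ ?_
  · simpa [Real.Gamma_one, sq] using h
  · intro z hz
    nlinarith [sq_nonneg (x - y), sq_nonneg (1 + z), mul_nonneg (sq_nonneg (x-y)) (sq_nonneg (1+z))]
  · have h2 : 0 < (x - y)^2 := by
      have := sub_ne_zero.mpr hne
      positivity
    nlinarith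

lemma gamma_Q_lt {t₁ t₂ : ℝ} (h1 : 0 < t₁) (h12 : t₁ < t₂) :
    Gamma (1+2*t₂)^2 * (Gamma (1+t₁) * Gamma (1+3*t₁)) <
    Gamma (1+2*t₁)^2 * (Gamma (1+t₂) * Gamma (1+3*t₂)) := by
  have h := gamma4_lt (u₁ := 1+2*t₂) (u₂ := 1+2*t₂) (u₃ := 1+t₁) (u₄ := 1+3*t₁)
      (w₁ := 1+2*t₁) (w₂ := 1+2*t₁) (w₃ := 1+t₂) (w₄ := 1+3*t₂)
      (by linarith) (by linarith) (by linarith) (by linarith)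
      (by linarith) (by linarith) (by linarith) (by linarith)
      (by ring) ?_ ?_
  · nlinarith [h]
  · intro z hz
    nlinarith [mul_nonneg (mul_nonneg (sub_pos.mpr h12).le (by linarith : (0:ℝ) ≤ 1 + z))
      (by nlinarith : (0:ℝ) ≤ (t₁+t₂)*(1+z) + 4*t₁*t₂)]
  · nlinarith [mul_pos (sub_pos.mpr h12) (by nlinarith : (0:ℝ) < (t₁+t₂) + 4*t₁*t₂)]

lemma aux_ind : ∀ m : ℕ, (43/45 + 1/(25*(9/10+(m:ℝ)))) * ∏ j ∈ Finset.range m, (((7/5:ℝ)+j)*((7/5:ℝ)+j))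
    ≤ ∏ j ∈ Finset.range m, (((6/5:ℝ)+j)*((8/5:ℝ)+j)) := by
  intro m
  induction m with
  | zero => norm_num
  | succ m ih =>
    rw [Finset.prod_range_succ, Finset.prod_range_succ]
    have hm : (0:ℝ) ≤ (m:ℝ) := Nat.cast_nonneg m
    have hP : (0:ℝ) ≤ ∏ j ∈ Finset.range m, (((7/5:ℝ)+j)*((7/5:ℝ)+j)) := by
      apply Finset.prod_nonneg; intro j _; have : (0:ℝ) ≤ (j:ℝ) := Nat.cast_nonneg j; positivity
    have hKm : (0:ℝ) < 43/45 + 1/(25*(9/10+(m:ℝ))) := by positivity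
    -- scalar step : K(m+1)*(7/5+m)^2 ≤ K m * ((6/5+m)*(8/5+m))
    have hstep : (43/45 + 1/(25*(9/10+((m:ℝ)+1)))) * (((7/5:ℝ)+m)*((7/5:ℝ)+m)) ≤
        (43/45 + 1/(25*(9/10+(m:ℝ)))) * (((6/5:ℝ)+m)*((8/5:ℝ)+m)) := by
      rw [div_add_div _ _ (by norm_num) (by positivity), div_add_div _ _ (by norm_num) (by positivity),
        div_mul_eq_mul_div, div_mul_eq_mul_div, div_le_div_iff₀ (by positivity) (by positivity)]
      ring_nf
      nlinarith [sq_nonneg ((m:ℝ)), hm, mul_nonneg hm hm, mul_nonneg (mul_nonneg hm hm) hm,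
        mul_nonneg (mul_nonneg (mul_nonneg hm hm) hm) hm]
    push_cast
    calc (43/45 + 1/(25*(9/10+((m:ℝ)+1)))) * ((∏ j ∈ Finset.range m, (((7/5:ℝ)+j)*((7/5:ℝ)+j))) * (((7/5:ℝ)+m)*((7/5:ℝ)+m)))
        = ((43/45 + 1/(25*(9/10+((m:ℝ)+1)))) * (((7/5:ℝ)+m)*((7/5:ℝ)+m))) * ∏ j ∈ Finset.range m, (((7/5:ℝ)+j)*((7/5:ℝ)+j)) := by ring
      _ ≤ ((43/45 + 1/(25*(9/10+(m:ℝ)))) * (((6/5:ℝ)+m)*((8/5:ℝ)+m))) * ∏ j ∈ Finset.range m, (((7/5:ℝ)+j)*((7/5:ℝ)+j)) := by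
          exact mul_le_mul_of_nonneg_right hstep hP
      _ = (((6/5:ℝ)+m)*((8/5:ℝ)+m)) * ((43/45 + 1/(25*(9/10+(m:ℝ)))) * ∏ j ∈ Finset.range m, (((7/5:ℝ)+j)*((7/5:ℝ)+j))) := by ring
      _ ≤ (((6/5:ℝ)+m)*((8/5:ℝ)+m)) * ∏ j ∈ Finset.range m, (((6/5:ℝ)+j)*((8/5:ℝ)+j)) := by
          apply mul_le_mul_of_nonneg_left ih (by positivity)
      _ = (∏ j ∈ Finset.range m, (((6/5:ℝ)+j)*((8/5:ℝ)+j))) * (((6/5:ℝ)+m)*((8/5:ℝ)+m)) := by ring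

lemma lower_fifth : (43/45 : ℝ) * (Gamma (6/5) * Gamma (8/5)) ≤ Gamma (7/5) * Gamma (7/5) := by
  have h := gamma_prod_le (43/45) (6/5) (8/5) 1 1 (7/5) (7/5) 1 1 (by norm_num)
      (by norm_num) (by norm_num) one_pos one_pos (by norm_num) (by norm_num) one_pos one_pos
      (by norm_num) ?_
  · simpa [Real.Gamma_one] using h
  · intro n
    have e1 : gp (7/5) n * gp (7/5) n = ∏ j ∈ Finset.range (n+1), (((7/5:ℝ)+j)*((7/5:ℝ)+j)) := by
      simp only [gp, ← Finset.prod_mul_distrib]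
    have e2 : gp (6/5) n * gp (8/5) n = ∏ j ∈ Finset.range (n+1), (((6/5:ℝ)+j)*((8/5:ℝ)+j)) := by
      simp only [gp, ← Finset.prod_mul_distrib]
    have hg1 : 0 < gp 1 n := gp_pos one_pos n
    have hP : (0:ℝ) ≤ ∏ j ∈ Finset.range (n+1), (((7/5:ℝ)+j)*((7/5:ℝ)+j)) := by
      apply Finset.prod_nonneg; intro j _; have : (0:ℝ) ≤ (j:ℝ) := Nat.cast_nonneg j; positivity
    have key : (43/45 : ℝ) * (gp (7/5) n * gp (7/5) n) ≤ gp (6/5) n * gp (8/5) n := by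
      rw [e1, e2]
      calc (43/45 : ℝ) * ∏ j ∈ Finset.range (n+1), (((7/5:ℝ)+j)*((7/5:ℝ)+j))
          ≤ (43/45 + 1/(25*(9/10+((n+1:ℕ):ℝ)))) * ∏ j ∈ Finset.range (n+1), (((7/5:ℝ)+j)*((7/5:ℝ)+j)) := by
            apply mul_le_mul_of_nonneg_right _ hP
            have h0 : (0:ℝ) ≤ ((n+1:ℕ):ℝ) := Nat.cast_nonneg _
            have h1 : (0:ℝ) < 1/(25*(9/10+((n+1:ℕ):ℝ))) := by positivity
            linarith
        _ ≤ ∏ j ∈ Finset.range (n+1), (((6/5:ℝ)+j)*((8/5:ℝ)+j)) := aux_ind (n+1)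
    nlinarith [mul_le_mul_of_nonneg_right key (mul_pos hg1 hg1).le]

noncomputable def Pfn (t : ℝ) : ℝ := 4*(1-2*t)^2 / (3*(1-3*t)*(2-3*t))

noncomputable def Qfn (t : ℝ) : ℝ := Gamma (1+2*t)^2 / (Gamma (1+t) * Gamma (1+3*t))

noncomputable def Phi (t : ℝ) : ℝ := Pfn t - Qfn t

lemma Gamma_neg_of_mem {x : ℝ} (h1 : -1 < x) (h0 : x < 0) : Gamma x < 0 := by
  have hx1 : 0 < x + 1 := by linarith
  have h := Real.Gamma_add_one (ne_of_lt h0)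
  have hpos : 0 < Gamma (x+1) := Real.Gamma_pos_of_pos hx1
  by_contra hcon
  push_neg at hcon
  nlinarith

lemma continuousAt_Gamma_pos {x : ℝ} (hx : 0 < x) : ContinuousAt Real.Gamma x := by
  refine (Real.differentiableAt_Gamma ?_).continuousAt
  intro m
  have h1 : -(m:ℝ) ≤ 0 := neg_nonpos.mpr (Nat.cast_nonneg m)
  exact ne_of_gt (lt_of_le_of_lt h1 hx)

-- key identity

lemma rho_eq {t : ℝ} (h0 : 0 < t) (h3 : t < 1/3) :
    rhoFn (1 - t) = (3*t^2*(1-3*t)*(2-3*t) / (Gamma (1+2*t))^2) * Phi t := by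
  have ht : t ≠ 0 := ne_of_gt h0
  have h2t1 : 2*t - 1 ≠ 0 := by intro h; nlinarith [h]
  have h3t1 : 3*t - 1 ≠ 0 := by intro h; nlinarith [h]
  have h3t2 : 3*t - 2 ≠ 0 := by intro h; nlinarith [h]
  have e1 : Gamma (2*t) = (2*t-1) * Gamma (2*t-1) := by
    have := Real.Gamma_add_one h2t1
    rw [show 2*t-1+1 = 2*t by ring] at this; exact this
  have e2 : Gamma (1+2*t) = 2*t * ((2*t-1) * Gamma (2*t-1)) := by
    rw [show 1+2*t = 2*t+1 by ring, Real.Gamma_add_one (by positivity : 2*t ≠ 0), e1]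
  have e3 : Gamma (1+t) = t * Gamma t := by
    rw [show 1+t = t+1 by ring, Real.Gamma_add_one ht]
  have e4 : Gamma (3*t-1) = (3*t-2) * Gamma (3*t-2) := by
    have := Real.Gamma_add_one h3t2
    rw [show 3*t-2+1 = 3*t-1 by ring] at this; exact this
  have e5 : Gamma (3*t) = (3*t-1) * ((3*t-2) * Gamma (3*t-2)) := by
    have := Real.Gamma_add_one h3t1
    rw [show 3*t-1+1 = 3*t by ring] at this; rw [this, e4]
  have e6 : Gamma (1+3*t) = 3*t * ((3*t-1) * ((3*t-2) * Gamma (3*t-2))) := by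
    rw [show 1+3*t = 3*t+1 by ring, Real.Gamma_add_one (by positivity : 3*t ≠ 0), e5]
  have hG2t1 : Gamma (2*t-1) ≠ 0 := by
    intro h
    have : Gamma (1+2*t) > 0 := Real.Gamma_pos_of_pos (by linarith)
    rw [e2, h] at this; simp at this
  have hGt : Gamma t ≠ 0 := ne_of_gt (Real.Gamma_pos_of_pos h0)
  have hG3t2 : Gamma (3*t-2) ≠ 0 := by
    intro h
    have : Gamma (1+3*t) > 0 := Real.Gamma_pos_of_pos (by linarith)
    rw [e6, h] at this; simp at this
  have a1 : 1 - 2*(1-t) = 2*t - 1 := by ring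
  have a2 : 1 - (1-t) = t := by ring
  have a3 : 1 - 3*(1-t) = 3*t - 2 := by ring
  rw [rhoFn, a1, a2, a3, Phi, Pfn, Qfn, e2, e3, e6]
  have d1 : (1:ℝ)-3*t ≠ 0 := by intro h; nlinarith [h]
  have d2 : (2:ℝ)-3*t ≠ 0 := by intro h; nlinarith [h]
  have hG3t2' : Gamma (t*3-2) ≠ 0 := by rw [mul_comm]; exact hG3t2
  have d1' : (1:ℝ)-t*3 ≠ 0 := by rw [mul_comm]; exact d1
  have d2' : (2:ℝ)-t*3 ≠ 0 := by rw [mul_comm]; exact d2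
  have d3' : t*3-(2:ℝ) ≠ 0 := by rw [mul_comm]; exact h3t2
  have d4' : t*3-(1:ℝ) ≠ 0 := by rw [mul_comm]; exact h3t1
  field_simp
  ring

lemma Qden_pos {t : ℝ} (h : 0 < t) : 0 < Gamma (1+t) * Gamma (1+3*t) := by
  have := Real.Gamma_pos_of_pos (by linarith : (0:ℝ) < 1+t)
  have := Real.Gamma_pos_of_pos (by linarith : (0:ℝ) < 1+3*t)
  positivity

lemma Phi_lt {t₁ t₂ : ℝ} (h0 : 0 < t₁) (h12 : t₁ < t₂) (h3 : t₂ < 1/3) :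
    Phi t₁ < Phi t₂ := by
  have hP : Pfn t₁ < Pfn t₂ := by
    rw [Pfn, Pfn, div_lt_div_iff₀ (by nlinarith) (by nlinarith)]
    nlinarith [mul_pos (sub_pos.mpr h12) (show (0:ℝ) < 1 - t₁ - t₂ by nlinarith)]
  have hQ : Qfn t₂ < Qfn t₁ := by
    rw [Qfn, Qfn, div_lt_div_iff₀ (Qden_pos (by linarith)) (Qden_pos h0)]
    exact gamma_Q_lt h0 h12
  have : Phi t₁ = Pfn t₁ - Qfn t₁ := rfl
  rw [Phi, Phi]
  linarith

lemma Phi_fifth_neg : Phi (1/5) < 0 := by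
  rw [Phi, Pfn, Qfn]
  have e1 : (1:ℝ)+2*(1/5) = 7/5 := by norm_num
  have e2 : (1:ℝ)+(1/5) = 6/5 := by norm_num
  have e3 : (1:ℝ)+3*(1/5) = 8/5 := by norm_num
  rw [e1, e2, e3]
  have hden : 0 < Gamma (6/5) * Gamma (8/5) := by
    have := Real.Gamma_pos_of_pos (by norm_num : (0:ℝ) < 6/5)
    have := Real.Gamma_pos_of_pos (by norm_num : (0:ℝ) < 8/5)
    positivity
  have hQ : (43/45 : ℝ) ≤ Gamma (7/5)^2 / (Gamma (6/5) * Gamma (8/5)) := by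
    rw [le_div_iff₀ hden, sq]
    linarith [lower_fifth]
  have hPval : (4*(1-2*(1/5 : ℝ))^2 / (3*(1-3*(1/5:ℝ))*(2-3*(1/5:ℝ)))) = 6/7 := by norm_num
  rw [hPval]
  linarith

lemma Phi_three_tenths_pos : 0 < Phi (3/10) := by
  rw [Phi, Pfn, Qfn]
  have e1 : (1:ℝ)+2*(3/10) = 8/5 := by norm_num
  have e2 : (1:ℝ)+(3/10) = 13/10 := by norm_num
  have e3 : (1:ℝ)+3*(3/10) = 19/10 := by norm_num
  rw [e1, e2, e3]
  have hden : 0 < Gamma (13/10) * Gamma (19/10) := by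
    have := Real.Gamma_pos_of_pos (by norm_num : (0:ℝ) < 13/10)
    have := Real.Gamma_pos_of_pos (by norm_num : (0:ℝ) < 19/10)
    positivity
  have hQ : Gamma (8/5)^2 / (Gamma (13/10) * Gamma (19/10)) < 1 := by
    rw [div_lt_one hden]
    have := Gamma_sq_mean_lt (x := 13/10) (y := 19/10) (by norm_num) (by norm_num) (by norm_num)
    rw [show ((13/10:ℝ)+19/10)/2 = 8/5 by norm_num] at this
    exact this
  have hPval : (4*(1-2*(3/10 : ℝ))^2 / (3*(1-3*(3/10:ℝ))*(2-3*(3/10:ℝ)))) = 64/33 := by norm_num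
  rw [hPval]
  linarith

lemma Phi_continuousOn : ContinuousOn Phi (Set.Icc (1/5 : ℝ) (3/10)) := by
  intro x hx
  obtain ⟨hx1, hx2⟩ := hx
  apply ContinuousWithinAt.sub
  · apply ContinuousAt.continuousWithinAt
    apply ContinuousAt.div
    · fun_prop
    · fun_prop
    · nlinarith
  · apply ContinuousAt.continuousWithinAt
    have c1 : ContinuousAt (fun t : ℝ => 1+2*t) x := by fun_prop
    have c2 : ContinuousAt (fun t : ℝ => 1+t) x := by fun_prop
    have c3 : ContinuousAt (fun t : ℝ => 1+3*t) x := by fun_prop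
    have g1 : ContinuousAt (fun t : ℝ => Gamma (1+2*t)) x :=
      ContinuousAt.comp (g := Real.Gamma) (f := fun t : ℝ => 1+2*t)
        (continuousAt_Gamma_pos (by linarith : (0:ℝ) < 1+2*x)) c1
    have g2 : ContinuousAt (fun t : ℝ => Gamma (1+t)) x :=
      ContinuousAt.comp (g := Real.Gamma) (f := fun t : ℝ => 1+t)
        (continuousAt_Gamma_pos (by linarith : (0:ℝ) < 1+x)) c2
    have g3 : ContinuousAt (fun t : ℝ => Gamma (1+3*t)) x :=
      ContinuousAt.comp (g := Real.Gamma) (f := fun t : ℝ => 1+3*t)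
        (continuousAt_Gamma_pos (by linarith : (0:ℝ) < 1+3*x)) c3
    exact ContinuousAt.div (g1.pow 2) (g2.mul g3) (ne_of_gt (Qden_pos (by linarith)))

lemma exists_tau : ∃ τ : ℝ, τ ∈ Set.Ioo (1/5 : ℝ) (3/10) ∧ Phi τ = 0 := by
  have h := intermediate_value_Icc (by norm_num : (1/5:ℝ) ≤ 3/10) Phi_continuousOn
  have h0 : (0:ℝ) ∈ Set.Icc (Phi (1/5)) (Phi (3/10)) :=
    ⟨le_of_lt Phi_fifth_neg, le_of_lt Phi_three_tenths_pos⟩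
  obtain ⟨τ, hτ, hτ0⟩ := h h0
  have hne1 : τ ≠ 1/5 := by
    intro h; rw [h] at hτ0; exact absurd hτ0 (ne_of_lt Phi_fifth_neg)
  have hne2 : τ ≠ 3/10 := by
    intro h; rw [h] at hτ0; exact absurd hτ0 (ne_of_gt Phi_three_tenths_pos)
  exact ⟨τ, ⟨hτ.1.lt_of_ne (Ne.symm hne1), hτ.2.lt_of_ne hne2⟩, hτ0⟩

lemma rho_pos_low {a : ℝ} (h0 : 0 < a) (h3 : a < 1/3) : 0 < rhoFn a := by
  have h1 : 0 < 1 - 3*a := by linarith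
  have hkey : Gamma (1-2*a)^2 < Gamma (1-a) * Gamma (1-3*a) := by
    have := Gamma_sq_mean_lt (x := 1-a) (y := 1-3*a) (by linarith) h1 (by intro h; nlinarith [h])
    rw [show ((1-a)+(1-3*a))/2 = 1-2*a by ring] at this
    exact this
  have hsq : 0 < Gamma (1-2*a)^2 := by
    have := Real.Gamma_pos_of_pos (by linarith : (0:ℝ) < 1-2*a); positivity
  rw [rhoFn]
  have := one_div_lt_one_div_of_lt hsq hkey
  linarith

lemma rho_pos_mid {a : ℝ} (h0 : 1/3 ≤ a) (h3 : a ≤ 2/3) : 0 < rhoFn a := by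
  have hGa : 0 < Gamma (1-a) := Real.Gamma_pos_of_pos (by linarith)
  have hG3 : Gamma (1-3*a) ≤ 0 := by
    rcases eq_or_lt_of_le h0 with h | h
    · rw [show 1-3*a = 0 by rw [← h]; ring, Real.Gamma_zero]
    rcases eq_or_lt_of_le h3 with h' | h'
    · rw [show 1-3*a = -(1:ℕ) by rw [h']; norm_num, Real.Gamma_neg_nat_eq_zero 1]
    · exact (Gamma_neg_of_mem (by linarith) (by linarith)).le
  have hterm2 : 1 / (Gamma (1-a) * Gamma (1-3*a)) ≤ 0 :=
    one_div_nonpos.mpr (mul_nonpos_of_nonneg_of_nonpos hGa.le hG3)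
  rcases eq_or_ne a (1/2) with h | h
  · subst h
    have hG12 : Gamma (1-3*(1/2 : ℝ)) < 0 := by
      apply Gamma_neg_of_mem <;> norm_num
    rw [rhoFn]
    rw [show (1:ℝ)-2*(1/2) = 0 by norm_num, Real.Gamma_zero]
    have : 1 / (Gamma (1-(1/2:ℝ)) * Gamma (1-3*(1/2:ℝ))) < 0 :=
      one_div_neg.mpr (mul_neg_of_pos_of_neg (Real.Gamma_pos_of_pos (by norm_num)) hG12)
    simpa using this
  · have hne : Gamma (1-2*a) ≠ 0 := by
      rcases lt_trichotomy a (1/2) with h' | h' | h'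
      · exact ne_of_gt (Real.Gamma_pos_of_pos (by linarith))
      · exact absurd h' h
      · exact ne_of_lt (Gamma_neg_of_mem (by linarith) (by linarith))
    have hterm1 : 0 < 1 / Gamma (1-2*a)^2 := by positivity
    rw [rhoFn]; linarith

lemma coeff_pos {t : ℝ} (h0 : 0 < t) (h3 : t < 1/3) :
    0 < 3*t^2*(1-3*t)*(2-3*t) / (Gamma (1+2*t))^2 := by
  have hG : 0 < Gamma (1+2*t) := Real.Gamma_pos_of_pos (by linarith)
  have h1 : 0 < 1-3*t := by linarith
  have h2 : 0 < 2-3*t := by linarith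
  positivity

lemma rho_eq' {a : ℝ} (h0 : 2/3 < a) (h1 : a < 1) :
    rhoFn a = (3*(1-a)^2*(1-3*(1-a))*(2-3*(1-a)) / (Gamma (1+2*(1-a)))^2) * Phi (1-a) := by
  have := rho_eq (t := 1-a) (by linarith) (by linarith)
  rwa [show 1-(1-a) = a by ring] at this

/-- There is a unique zero `α_*` of `ρ` in `(0,1)`; it lies in `(2/3, 4/5)`,
`ρ > 0` before it and `ρ < 0` after it. -/
theorem rhoFn_unique_zero :
    ∃ αs : ℝ, αs ∈ Set.Ioo (0 : ℝ) 1 ∧ rhoFn αs = 0 ∧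
      (∀ a ∈ Set.Ioo (0 : ℝ) 1, rhoFn a = 0 → a = αs) ∧
      αs ∈ Set.Ioo (2/3 : ℝ) (4/5 : ℝ) ∧
      (∀ a ∈ Set.Ioo (0 : ℝ) αs, 0 < rhoFn a) ∧
      (∀ a ∈ Set.Ioo αs (1 : ℝ), rhoFn a < 0) := by
  obtain ⟨τ, ⟨hτ1, hτ2⟩, hτ0⟩ := exists_tau
  have hpos : ∀ a ∈ Set.Ioo (0 : ℝ) (1-τ), 0 < rhoFn a := by
    rintro a ⟨ha0, ha1⟩
    rcases lt_or_ge a (1/3) with h | h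
    · exact rho_pos_low ha0 h
    rcases le_or_gt a (2/3) with h' | h'
    · exact rho_pos_mid h h'
    · rw [rho_eq' h' (by linarith)]
      apply mul_pos (coeff_pos (by linarith) (by linarith))
      have := Phi_lt (t₁ := τ) (t₂ := 1-a) (by linarith) (by linarith) (by linarith)
      rw [hτ0] at this
      exact this
  have hneg : ∀ a ∈ Set.Ioo (1-τ : ℝ) 1, rhoFn a < 0 := by
    rintro a ⟨ha0, ha1⟩
    have h23 : 2/3 < a := by linarith
    rw [rho_eq' h23 ha1]
    apply mul_neg_of_pos_of_neg (coeff_pos (by linarith) (by linarith))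
    have := Phi_lt (t₁ := 1-a) (t₂ := τ) (by linarith) (by linarith) (by linarith)
    rw [hτ0] at this
    exact this
  refine ⟨1 - τ, ⟨by linarith, by linarith⟩, ?_, ?_, ⟨by linarith, by linarith⟩, hpos, hneg⟩
  · rw [rho_eq (by linarith) (by linarith), hτ0, mul_zero]
  · rintro a ⟨ha0, ha1⟩ hz
    rcases lt_trichotomy a (1-τ) with h | h | h
    · exact absurd hz (ne_of_gt (hpos a ⟨ha0, h⟩))
    · exact h
    · exact absurd hz (ne_of_lt (hneg a ⟨h, ha1⟩))
end

section
/- Let β ∈ (0,1). Then there exists a unique α_*(β) ∈ ((β+1)/2, 1) such that 1/Γ(β − α)² = 1/(Γ(β)·Γ(β − 2α)) at α = α_*(β), and for every α with α_*(β) < α < 1 the function x ↦ φ(-α, β, -x) is not log-concave on [0,∞). -/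
set_option maxHeartbeats 800000

/-- The Wright function `φ(ρ, β, x) = ∑ x^n / (n! Γ(β + ρ n))`. -/
noncomputable def wright (ρ β x : ℝ) : ℝ :=
  ∑' n : ℕ, x ^ n / ((n.factorial : ℝ) * Real.Gamma (β + ρ * n))

/-- `f` is log-concave on the set `S`. -/
def LogConcaveOn' (f : ℝ → ℝ) (S : Set ℝ) : Prop :=
  ∀ x ∈ S, ∀ y ∈ S, ∀ t ∈ Set.Icc (0 : ℝ) 1,
    f ((1 - t) * x + t * y) ≥ f x ^ (1 - t) * f y ^ t

open Real Set


lemma gneg {x : ℝ} (h : x ∈ Set.Ioo (-1:ℝ) 0) : Real.Gamma x < 0 := by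
  obtain ⟨h1, h2⟩ := h
  have hx1 : (0:ℝ) < x + 1 := by linarith
  have := Real.Gamma_add_one (ne_of_lt h2)
  have hpos : 0 < Real.Gamma (x+1) := Real.Gamma_pos_of_pos hx1
  nlinarith

lemma gpos2 {x : ℝ} (h : x ∈ Set.Ioo (-2:ℝ) (-1)) : 0 < Real.Gamma x := by
  obtain ⟨h1, h2⟩ := h
  have hx : x ≠ 0 := by linarith
  have := Real.Gamma_add_one hx
  have hneg : Real.Gamma (x+1) < 0 := gneg ⟨by linarith, by linarith⟩
  nlinarith

lemma auxm1 {x : ℝ} (h : x ∈ Set.Ioo (-1:ℝ) 0) : ∀ m : ℕ, x ≠ -(m:ℝ) := by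
  intro m
  rcases m with _ | m
  · simpa using h.2.ne
  · intro hx
    rw [hx] at h
    have h1 := h.1
    have : (0:ℝ) ≤ (m:ℝ) := Nat.cast_nonneg m
    push_cast at h1
    linarith

lemma auxm2 {x : ℝ} (h : x ∈ Set.Ioo (-2:ℝ) (-1)) : ∀ m : ℕ, x ≠ -(m:ℝ) := by
  intro m
  rcases m with _ | _ | m
  · intro hx
    rw [hx] at h
    have := h.2
    norm_num at this
  · intro hx
    rw [hx] at h
    have := h.2
    norm_num at this
  · intro hx
    rw [hx] at h
    have h1 := h.1
    have : (0:ℝ) ≤ (m:ℝ) := Nat.cast_nonneg m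
    push_cast at h1
    linarith

noncomputable def psi (x : ℝ) : ℝ := deriv Real.Gamma x / Real.Gamma x

lemma psi_mono {x y : ℝ} (hx : 0 < x) (hxy : x ≤ y) : psi x ≤ psi y := by
  have hnp : ∀ z : ℝ, 0 < z → ∀ m : ℕ, z ≠ -(m:ℝ) := by
    intro z hz m hzm
    have : (0:ℝ) ≤ (m:ℝ) := Nat.cast_nonneg m
    rw [hzm] at hz; linarith
  have hder : ∀ z ∈ Set.Ioi (0:ℝ), DifferentiableAt ℝ (Real.log ∘ Real.Gamma) z := by
    intro z hz
    exact (Real.differentiableAt_Gamma (hnp z hz)).log (Real.Gamma_pos_of_pos hz).ne'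
  have hmono := Real.convexOn_log_Gamma.monotoneOn_deriv hder
  have key := hmono (Set.mem_Ioi.mpr hx) (Set.mem_Ioi.mpr (lt_of_lt_of_le hx hxy)) hxy
  have hrw : ∀ z : ℝ, 0 < z → deriv (Real.log ∘ Real.Gamma) z = psi z := by
    intro z hz
    rw [Function.comp_def]
    rw [deriv.log (Real.differentiableAt_Gamma (hnp z hz)) (Real.Gamma_pos_of_pos hz).ne']
    rfl
  rwa [hrw x hx, hrw y (lt_of_lt_of_le hx hxy)] at key

lemma psi_add_one {x : ℝ} (hx : ∀ m : ℕ, x ≠ -(m:ℝ)) : psi (x + 1) = psi x + 1 / x := by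
  have hx0 : x ≠ 0 := by simpa using hx 0
  have hx1 : ∀ m : ℕ, x + 1 ≠ -(m:ℝ) := by
    intro m h
    have := hx (m+1)
    push_cast at this
    apply this; linarith
  have hd : HasDerivAt Real.Gamma (deriv Real.Gamma x) x :=
    (Real.differentiableAt_Gamma hx).hasDerivAt
  have hd1 : HasDerivAt Real.Gamma (deriv Real.Gamma (x+1)) (x+1) :=
    (Real.differentiableAt_Gamma hx1).hasDerivAt
  have hinner : HasDerivAt (fun y : ℝ => y + 1) 1 x := (hasDerivAt_id x).add_const 1
  have h1 : HasDerivAt (fun y => Real.Gamma (y + 1)) (deriv Real.Gamma (x+1)) x := by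
    have := hd1.comp x hinner
    rw [mul_one] at this
    exact this
  have h2 : HasDerivAt (fun y => y * Real.Gamma y)
      (1 * Real.Gamma x + x * deriv Real.Gamma x) x := (hasDerivAt_id x).mul hd
  have hev : (fun y => Real.Gamma (y + 1)) =ᶠ[nhds x] fun y => y * Real.Gamma y := by
    filter_upwards [eventually_ne_nhds hx0] with y hy
    exact Real.Gamma_add_one hy
  have h1' : HasDerivAt (fun y => y * Real.Gamma y) (deriv Real.Gamma (x+1)) x :=
    h1.congr_of_eventuallyEq hev.symm
  have heq : deriv Real.Gamma (x+1) = Real.Gamma x + x * deriv Real.Gamma x := by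
    have := h1'.unique h2
    linarith [this]
  have hgx : Real.Gamma x ≠ 0 := Real.Gamma_ne_zero hx
  rw [psi, psi, heq, Real.Gamma_add_one hx0]
  field_simp
  ring

noncomputable def LL (β a : ℝ) : ℝ :=
  2 * Real.log (-Real.Gamma (β - a)) - Real.log (Real.Gamma β)
    - Real.log (Real.Gamma (β - 2*a))

lemma hu_mem {β a : ℝ} (hβ : β ∈ Set.Ioo (0:ℝ) 1) (ha : a ∈ Set.Ioo ((β+1)/2) 1) :
    β - a ∈ Set.Ioo (-1:ℝ) 0 := by
  obtain ⟨h1, h2⟩ := hβ; obtain ⟨h3, h4⟩ := ha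
  constructor <;> [linarith; linarith]

lemma hv_mem {β a : ℝ} (hβ : β ∈ Set.Ioo (0:ℝ) 1) (ha : a ∈ Set.Ioo ((β+1)/2) 1) :
    β - 2*a ∈ Set.Ioo (-2:ℝ) (-1) := by
  obtain ⟨h1, h2⟩ := hβ; obtain ⟨h3, h4⟩ := ha
  constructor <;> [linarith; linarith]

lemma hasDerivAt_LL {β a : ℝ} (hβ : β ∈ Set.Ioo (0:ℝ) 1) (ha : a ∈ Set.Ioo ((β+1)/2) 1) :
    HasDerivAt (LL β) (2 * (psi (β - 2*a) - psi (β - a))) a := by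
  have hu := hu_mem hβ ha
  have hv := hv_mem hβ ha
  have hGu : Real.Gamma (β - a) < 0 := gneg hu
  have hGv : 0 < Real.Gamma (β - 2*a) := gpos2 hv
  -- first term
  have hinner1 : HasDerivAt (fun x : ℝ => β - x) (-1) a := by
    simpa using (hasDerivAt_id a).const_sub β
  have hg1 : HasDerivAt (fun x : ℝ => Real.Gamma (β - x))
      (deriv Real.Gamma (β - a) * (-1)) a :=
    (Real.differentiableAt_Gamma (auxm1 hu)).hasDerivAt.comp a hinner1
  have hg1' : HasDerivAt (fun x : ℝ => -Real.Gamma (β - x))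
      (deriv Real.Gamma (β - a)) a := by
    have := hg1.neg
    rw [show -(deriv Real.Gamma (β - a) * (-1)) = deriv Real.Gamma (β - a) by ring] at this
    exact this
  have hlog1 : HasDerivAt (fun x : ℝ => Real.log (-Real.Gamma (β - x)))
      (deriv Real.Gamma (β - a) / -Real.Gamma (β - a)) a :=
    hg1'.log (by simpa using hGu.ne)
  -- second term
  have hinner2 : HasDerivAt (fun x : ℝ => β - 2*x) (-2) a := by
    simpa using ((hasDerivAt_id a).const_mul (2:ℝ)).const_sub β
  have hg2 : HasDerivAt (fun x : ℝ => Real.Gamma (β - 2*x))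
      (deriv Real.Gamma (β - 2*a) * (-2)) a :=
    HasDerivAt.comp (h := fun x : ℝ => β - 2*x) a (Real.differentiableAt_Gamma (auxm2 hv)).hasDerivAt hinner2
  have hlog2 : HasDerivAt (fun x : ℝ => Real.log (Real.Gamma (β - 2*x)))
      (deriv Real.Gamma (β - 2*a) * (-2) / Real.Gamma (β - 2*a)) a :=
    hg2.log hGv.ne'
  have := ((hlog1.const_mul (2:ℝ)).sub_const (Real.log (Real.Gamma β))).sub hlog2
  refine this.congr_deriv ?_
  rw [psi, psi]
  field_simp
  ring

lemma LL_deriv_pos {β a : ℝ} (hβ : β ∈ Set.Ioo (0:ℝ) 1) (ha : a ∈ Set.Ioo ((β+1)/2) 1) :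
    0 < 2 * (psi (β - 2*a) - psi (β - a)) := by
  obtain ⟨hb0, hb1⟩ := hβ
  obtain ⟨ha1, ha2⟩ := ha
  have hu := hu_mem ⟨hb0, hb1⟩ ⟨ha1, ha2⟩
  have hv := hv_mem ⟨hb0, hb1⟩ ⟨ha1, ha2⟩
  have hv1 : β - 2*a + 1 ∈ Set.Ioo (-1:ℝ) 0 := ⟨by linarith [hv.1], by linarith [hv.2]⟩
  -- recurrences
  have r1 : psi (β - a + 1) = psi (β - a) + 1 / (β - a) := psi_add_one (auxm1 hu)
  have r2 : psi (β - 2*a + 1) = psi (β - 2*a) + 1 / (β - 2*a) := psi_add_one (auxm2 hv)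
  have r3 : psi (β - 2*a + 1 + 1) = psi (β - 2*a + 1) + 1 / (β - 2*a + 1) :=
    psi_add_one (auxm1 hv1)
  -- monotonicity: β - a + 1 ≤ β - 2a + 2, both positive
  have hm : psi (β - a + 1) ≤ psi (β - 2*a + 1 + 1) :=
    psi_mono (by linarith [hu.1]) (by linarith)
  -- 1/(β-a) - 1/(β-2a+1) > 0
  have hba : β - a < 0 := hu.2
  have hbv1 : β - 2*a + 1 < 0 := hv1.2
  have hfrac : 1 / (β - 2*a + 1) < 1 / (β - a) :=
    one_div_lt_one_div_of_neg_of_lt hbv1 (by linarith)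
  have hfrac2 : 0 < -(1 / (β - 2*a)) := by
    have h0 : β - 2*a < 0 := by linarith [hv.2]
    have : 1 / (β - 2*a) < 0 := div_neg_of_pos_of_neg one_pos h0
    linarith
  have key : psi (β - a) < psi (β - 2*a) := by nlinarith
  linarith

lemma LL_strictMono {β : ℝ} (hβ : β ∈ Set.Ioo (0:ℝ) 1) :
    StrictMonoOn (LL β) (Set.Ioo ((β+1)/2) 1) := by
  apply strictMonoOn_of_deriv_pos (convex_Ioo _ _)
  · intro a ha
    exact (hasDerivAt_LL hβ ha).differentiableAt.continuousAt.continuousWithinAt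
  · intro a ha
    rw [interior_Ioo] at ha
    rw [(hasDerivAt_LL hβ ha).deriv]
    exact LL_deriv_pos hβ ha

lemma LL_eq_zero_iff {β a : ℝ} (hβ : β ∈ Set.Ioo (0:ℝ) 1) (ha : a ∈ Set.Ioo ((β+1)/2) 1) :
    (LL β a = 0 ↔
      1 / Real.Gamma (β - a) ^ 2 = 1 / (Real.Gamma β * Real.Gamma (β - 2 * a))) := by
  have hGu : Real.Gamma (β - a) < 0 := gneg (hu_mem hβ ha)
  have hGv : 0 < Real.Gamma (β - 2*a) := gpos2 (hv_mem hβ ha)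
  have hGb : 0 < Real.Gamma β := Real.Gamma_pos_of_pos hβ.1
  have hsq : 0 < Real.Gamma (β - a) ^ 2 := pow_two_pos_of_ne_zero hGu.ne
  have hprod : 0 < Real.Gamma β * Real.Gamma (β - 2*a) := mul_pos hGb hGv
  have hL : LL β a = Real.log (Real.Gamma (β - a) ^ 2)
      - Real.log (Real.Gamma β * Real.Gamma (β - 2*a)) := by
    rw [LL, Real.log_mul hGb.ne' hGv.ne']
    have : Real.Gamma (β - a) ^ 2 = (-Real.Gamma (β - a)) ^ 2 := by ring
    rw [this, Real.log_pow]
    push_cast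
    ring
  rw [hL, sub_eq_zero]
  constructor
  · intro h
    have h2 : Real.Gamma (β - a) ^ 2 = Real.Gamma β * Real.Gamma (β - 2*a) := by
      have := congrArg Real.exp h
      rwa [Real.exp_log hsq, Real.exp_log hprod] at this
    rw [h2]
  · intro h
    have : Real.Gamma (β - a) ^ 2 = Real.Gamma β * Real.Gamma (β - 2*a) := by
      have h' := congrArg (·⁻¹) h
      simp only [one_div, inv_inv] at h'
      exact h'
    rw [this]

lemma LL_pos_lt {β a : ℝ} (hβ : β ∈ Set.Ioo (0:ℝ) 1) (ha : a ∈ Set.Ioo ((β+1)/2) 1)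
    (hL : 0 < LL β a) :
    1 / Real.Gamma (β - a) ^ 2 < 1 / (Real.Gamma β * Real.Gamma (β - 2 * a)) := by
  have hGu : Real.Gamma (β - a) < 0 := gneg (hu_mem hβ ha)
  have hGv : 0 < Real.Gamma (β - 2*a) := gpos2 (hv_mem hβ ha)
  have hGb : 0 < Real.Gamma β := Real.Gamma_pos_of_pos hβ.1
  have hsq : 0 < Real.Gamma (β - a) ^ 2 := pow_two_pos_of_ne_zero hGu.ne
  have hprod : 0 < Real.Gamma β * Real.Gamma (β - 2*a) := mul_pos hGb hGv
  have hL' : Real.log (Real.Gamma β * Real.Gamma (β - 2*a))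
      < Real.log (Real.Gamma (β - a) ^ 2) := by
    have : LL β a = Real.log (Real.Gamma (β - a) ^ 2)
        - Real.log (Real.Gamma β * Real.Gamma (β - 2*a)) := by
      rw [LL, Real.log_mul hGb.ne' hGv.ne']
      have h2 : Real.Gamma (β - a) ^ 2 = (-Real.Gamma (β - a)) ^ 2 := by ring
      rw [h2, Real.log_pow]
      push_cast
      ring
    linarith [this ▸ hL]
  have := (Real.log_lt_log_iff hprod hsq).mp hL'
  exact one_div_lt_one_div_of_lt hprod this

lemma cont_inv_Gamma : Continuous fun x : ℝ => (Real.Gamma x)⁻¹ := by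
  have h : ∀ x : ℝ, (Real.Gamma x)⁻¹ = ((Complex.Gamma (x:ℂ))⁻¹).re := by
    intro x
    rw [Complex.Gamma_ofReal, ← Complex.ofReal_inv, Complex.ofReal_re]
  simp only [funext h]
  exact Complex.continuous_re.comp
    (Complex.differentiable_one_div_Gamma.continuous.comp Complex.continuous_ofReal)

noncomputable def FF (β a : ℝ) : ℝ :=
  1 / Real.Gamma (β - a) ^ 2 - 1 / (Real.Gamma β * Real.Gamma (β - 2*a))

lemma cont_FF (β : ℝ) : Continuous (FF β) := by
  have h : FF β = fun a =>
      ((Real.Gamma (β - a))⁻¹) ^ 2 - (Real.Gamma β)⁻¹ * (Real.Gamma (β - 2*a))⁻¹ := by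
    funext a
    rw [FF, one_div, one_div, inv_pow, mul_inv]
  rw [h]
  apply Continuous.sub
  · exact (cont_inv_Gamma.comp (continuous_const.sub continuous_id)).pow 2
  · exact continuous_const.mul
      (cont_inv_Gamma.comp (continuous_const.sub (continuous_const.mul continuous_id)))

lemma FF_left_pos {β : ℝ} (hβ : β ∈ Set.Ioo (0:ℝ) 1) : 0 < FF β ((β+1)/2) := by
  obtain ⟨h0, h1⟩ := hβ
  have e1 : β - (β+1)/2 = (β-1)/2 := by ring
  have e2 : β - 2*((β+1)/2) = -1 := by ring
  have hG0 : Real.Gamma (-1 : ℝ) = 0 := by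
    have := Real.Gamma_neg_nat_eq_zero 1
    norm_num at this
    exact this
  rw [FF, e1, e2, hG0, mul_zero, div_zero, sub_zero]
  have hG : Real.Gamma ((β-1)/2) < 0 := gneg ⟨by linarith, by linarith⟩
  have := pow_two_pos_of_ne_zero hG.ne
  positivity

lemma FF_right_neg {β : ℝ} (hβ : β ∈ Set.Ioo (0:ℝ) 1) : FF β 1 < 0 := by
  obtain ⟨h0, h1⟩ := hβ
  have hGb : 0 < Real.Gamma β := Real.Gamma_pos_of_pos h0
  have hG1 : Real.Gamma (β - 1) < 0 := gneg ⟨by linarith, by linarith⟩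
  have hG2 : 0 < Real.Gamma (β - 2) := gpos2 ⟨by linarith, by linarith⟩
  have e1 : Real.Gamma β = (β - 1) * Real.Gamma (β - 1) := by
    have := Real.Gamma_add_one (s := β - 1) (by intro h; rw [sub_eq_zero] at h; linarith)
    rw [show β - 1 + 1 = β by ring] at this
    exact this
  have e2 : Real.Gamma (β - 1) = (β - 2) * Real.Gamma (β - 2) := by
    have := Real.Gamma_add_one (s := β - 2) (by intro h; rw [sub_eq_zero] at h; linarith)
    rw [show β - 2 + 1 = β - 1 by ring] at this
    exact this
  have hY : 0 < Real.Gamma β * Real.Gamma (β - 2*1) := by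
    rw [show β - 2*1 = β - 2 by ring]; exact mul_pos hGb hG2
  have hXY : Real.Gamma β * Real.Gamma (β - 2*1) < Real.Gamma (β - 1) ^ 2 := by
    rw [show β - 2*1 = β - 2 by ring]
    nlinarith [sq_nonneg (Real.Gamma (β - 2))]
  have := one_div_lt_one_div_of_lt hY hXY
  rw [FF, show β - (1:ℝ) = β - 1 by ring]
  linarith

lemma exists_root {β : ℝ} (hβ : β ∈ Set.Ioo (0:ℝ) 1) :
    ∃ αs ∈ Set.Ioo ((β+1)/2) 1, FF β αs = 0 := by
  obtain ⟨h0, h1⟩ := hβ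
  have hab : (β+1)/2 ≤ 1 := by linarith
  have hsub := intermediate_value_Ioo' hab (cont_FF β).continuousOn
  have h0mem : (0:ℝ) ∈ Set.Ioo (FF β 1) (FF β ((β+1)/2)) :=
    ⟨FF_right_neg ⟨h0, h1⟩, FF_left_pos ⟨h0, h1⟩⟩
  obtain ⟨αs, hmem, heq⟩ := hsub h0mem
  exact ⟨αs, hmem, heq⟩

noncomputable def AA (β α : ℝ) (n : ℕ) : ℝ :=
  ((n.factorial : ℝ) * Real.Gamma (β - α * n))⁻¹

noncomputable def gg0 (β α : ℝ) (n : ℕ) : ℝ :=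
  Real.Gamma (1 - β + α * n) / (π * n.factorial)

noncomputable def gg (β α : ℝ) (n : ℕ) : ℝ := gg0 β α n * (1/2)^n

lemma abs_sin_le_one' (x : ℝ) : |Real.sin x| ≤ 1 :=
  abs_le.mpr ⟨Real.neg_one_le_sin x, Real.sin_le_one x⟩

lemma inv_gamma_abs_le {s : ℝ} (hs : s < 1) :
    |(Real.Gamma s)⁻¹| ≤ Real.Gamma (1 - s) / π := by
  have h1s : 0 < 1 - s := by linarith
  have hG1 : 0 < Real.Gamma (1 - s) := Real.Gamma_pos_of_pos h1s
  rcases eq_or_ne (Real.Gamma s) 0 with h | h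
  · rw [h, inv_zero, abs_zero]
    positivity
  · have hsin : Real.sin (π * s) ≠ 0 := by
      intro hz
      obtain ⟨n, hn⟩ := Real.sin_eq_zero_iff.mp hz
      have hsn : (n : ℝ) = s := by
        have h' : π * (n:ℝ) = π * s := by linarith [hn]
        exact mul_left_cancel₀ Real.pi_ne_zero h'
      have hn1 : n < 1 := by exact_mod_cast hsn ▸ hs
      apply h
      rw [Real.Gamma_eq_zero_iff]
      refine ⟨(-n).toNat, ?_⟩
      rw [← hsn]
      have h3 : ((-n).toNat : ℤ) = -n := Int.toNat_of_nonneg (by omega)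
      have h2 : (((-n).toNat : ℕ) : ℝ) = -(n:ℝ) := by exact_mod_cast congrArg (fun z : ℤ => (z : ℝ)) h3
      rw [h2, neg_neg]
    have hrefl := Real.Gamma_mul_Gamma_one_sub s
    have key : Real.Gamma s * Real.Gamma (1 - s) * Real.sin (π * s) = π := by
      rw [hrefl]
      field_simp
    have hval : (Real.Gamma s)⁻¹ = Real.Gamma (1 - s) * Real.sin (π * s) / π := by
      rw [eq_div_iff Real.pi_ne_zero, inv_mul_eq_div, div_eq_iff h]
      linarith [key]
    rw [hval, abs_div, abs_mul, abs_of_pos hG1, abs_of_pos Real.pi_pos]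
    gcongr
    calc Real.Gamma (1 - s) * |Real.sin (π * s)|
        ≤ Real.Gamma (1 - s) * 1 := by gcongr; exact abs_sin_le_one' _
      _ = Real.Gamma (1 - s) := mul_one _

lemma gg0_pos {β α : ℝ} (hβ : β < 1) (hα : 0 < α) (n : ℕ) : 0 < gg0 β α n := by
  have h1 : (0:ℝ) < 1 - β + α * n := by
    have : (0:ℝ) ≤ α * n := by positivity
    linarith
  have := Real.Gamma_pos_of_pos h1
  have hf : (0:ℝ) < (n.factorial : ℝ) := by exact_mod_cast n.factorial_pos
  rw [gg0]
  positivity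

lemma gg_pos {β α : ℝ} (hβ : β < 1) (hα : 0 < α) (n : ℕ) : 0 < gg β α n := by
  have := gg0_pos hβ hα n
  rw [gg]
  positivity

lemma abs_AA_le {β α : ℝ} (hβ0 : 0 < β) (hβ : β < 1) (hα : 0 < α) (n : ℕ) :
    |AA β α n| ≤ gg0 β α n := by
  have hf : (0:ℝ) < (n.factorial : ℝ) := by exact_mod_cast n.factorial_pos
  have hs : β - α * n < 1 := by
    have : (0:ℝ) ≤ α * n := by positivity
    linarith
  calc |AA β α n| = ((n.factorial:ℝ))⁻¹ * |(Real.Gamma (β - α * n))⁻¹| := by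
        rw [AA, mul_inv, abs_mul, abs_inv, Nat.abs_cast]
    _ ≤ ((n.factorial:ℝ))⁻¹ * (Real.Gamma (1 - (β - α * n)) / π) := by
        gcongr
        exact inv_gamma_abs_le hs
    _ = gg0 β α n := by
        rw [gg0, show (1:ℝ) - (β - α * n) = 1 - β + α * n from by ring,
          inv_mul_eq_div, div_div]

lemma summable_gg {β α : ℝ} (hβ0 : 0 < β) (hβ : β < 1) (hα0 : 0 < α) (hα1 : α < 1) :
    Summable (gg β α) := by
  apply summable_of_ratio_norm_eventually_le (r := 1/2) (by norm_num)
  rw [Filter.eventually_atTop]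
  refine ⟨⌈3/α⌉₊, fun n hn => ?_⟩
  set x := 1 - β + α * n with hx
  have hαn : 3 ≤ α * n := by
    have h1 : (3:ℝ)/α ≤ (⌈3/α⌉₊ : ℝ) := Nat.le_ceil _
    have h2 : ((⌈3/α⌉₊ : ℕ) : ℝ) ≤ (n : ℝ) := by exact_mod_cast hn
    calc (3:ℝ) = (3/α) * α := by field_simp
      _ ≤ (n:ℝ) * α := by gcongr; linarith
      _ = α * n := by ring
  have hx2 : 2 ≤ x := by rw [hx]; linarith
  have hx0 : 0 < x := by linarith
  have hxn : x ≤ n + 1 := by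
    have hn0 : (0:ℝ) ≤ n := Nat.cast_nonneg n
    have : α * n ≤ n := by nlinarith
    rw [hx]; linarith
  have hGx : 0 < Real.Gamma x := Real.Gamma_pos_of_pos hx0
  have harg : 1 - β + α * (n+1 : ℕ) = x + α := by rw [hx]; push_cast; ring
  have hmono : Real.Gamma (x + α) ≤ Real.Gamma (x + 1) := by
    rcases eq_or_lt_of_le hα1.le with h | h
    · rw [h]
    · exact le_of_lt (Real.Gamma_strictMonoOn_Ici (by simpa using by linarith : x + α ∈ Set.Ici (2:ℝ))
        (by simpa using by linarith : x + 1 ∈ Set.Ici (2:ℝ)) (by linarith))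
  have hG1 : Real.Gamma (x + α) ≤ ((n:ℝ) + 1) * Real.Gamma x := by
    calc Real.Gamma (x + α) ≤ Real.Gamma (x + 1) := hmono
      _ = x * Real.Gamma x := Real.Gamma_add_one hx0.ne'
      _ ≤ ((n:ℝ) + 1) * Real.Gamma x := by gcongr
  have hfac : (0:ℝ) < (n.factorial : ℝ) := by exact_mod_cast n.factorial_pos
  have hfacs : ((n+1 : ℕ).factorial : ℝ) = ((n:ℝ)+1) * (n.factorial : ℝ) := by
    rw [Nat.factorial_succ]; push_cast; ring
  have hpos1 : 0 < gg β α n := gg_pos hβ hα0 n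
  have hposn : 0 < gg β α (n+1) := gg_pos hβ hα0 (n+1)
  rw [Real.norm_eq_abs, Real.norm_eq_abs, abs_of_pos hposn, abs_of_pos hpos1]
  have step1 : gg β α (n+1) ≤ ((n:ℝ)+1) * Real.Gamma x / (π * ((n+1:ℕ).factorial)) * (1/2)^(n+1) := by
    rw [gg, gg0, harg]
    gcongr
  calc gg β α (n+1) ≤ ((n:ℝ)+1) * Real.Gamma x / (π * ((n+1:ℕ).factorial)) * (1/2)^(n+1) := step1
    _ = 1/2 * gg β α n := by
        rw [gg, gg0, hfacs, pow_succ, ← hx]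
        have hπ := Real.pi_ne_zero
        have hn1 : ((n:ℝ)+1) ≠ 0 := by positivity
        field_simp

lemma AA_est {β α : ℝ} (hβ0 : 0 < β) (hβ1 : β < 1) (hα0 : 0 < α) (hα1 : α < 1) :
    ∃ M : ℝ, 0 ≤ M ∧ ∀ y : ℝ, |y| ≤ 1/2 →
      Summable (fun n => y^n * AA β α n) ∧
      |(∑' n, y^n * AA β α n) - (AA β α 0 + y * AA β α 1 + y^2 * AA β α 2)|
        ≤ M * |y|^3 := by
  have hgg := summable_gg hβ0 hβ1 hα0 hα1
  have hshift : Summable (fun n => gg β α (n+3)) := (summable_nat_add_iff 3).mpr hgg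
  refine ⟨8 * ∑' n, gg β α (n+3), ?_, ?_⟩
  · have : 0 ≤ ∑' n, gg β α (n+3) := tsum_nonneg fun n => (gg_pos hβ1 hα0 (n+3)).le
    linarith
  intro y hy
  have habs : ∀ n, |y^n * AA β α n| ≤ gg β α n := by
    intro n
    rw [abs_mul, abs_pow, gg]
    have h1 : |y|^n ≤ (1/2)^n := pow_le_pow_left₀ (abs_nonneg y) hy n
    have h2 : |AA β α n| ≤ gg0 β α n := abs_AA_le hβ0 hβ1 hα0 n
    calc |y|^n * |AA β α n| ≤ (1/2)^n * gg0 β α n :=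
          mul_le_mul h1 h2 (abs_nonneg _) (by positivity)
      _ = gg0 β α n * (1/2)^n := mul_comm _ _
  have hsum : Summable (fun n => y^n * AA β α n) :=
    Summable.of_norm_bounded hgg (fun n => by rw [Real.norm_eq_abs]; exact habs n)
  refine ⟨hsum, ?_⟩
  have hsum3 : Summable (fun n => y^(n+3) * AA β α (n+3)) :=
    (summable_nat_add_iff 3).mpr hsum
  have hsum3a : Summable (fun n => |y^(n+3) * AA β α (n+3)|) := hsum3.abs
  have hsumb : Summable (fun n => |y|^3 * (8 * gg β α (n+3))) :=
    (hshift.mul_left 8).mul_left (|y|^3)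
  have hbnd : ∀ n, |y^(n+3) * AA β α (n+3)| ≤ |y|^3 * (8 * gg β α (n+3)) := by
    intro n
    have hp : (1/2:ℝ)^n = 8 * (1/2)^(n+3) := by
      rw [pow_add]; ring
    have h1 : |y|^n ≤ (1/2)^n := pow_le_pow_left₀ (abs_nonneg y) hy n
    have h2 : |AA β α (n+3)| ≤ gg0 β α (n+3) := abs_AA_le hβ0 hβ1 hα0 (n+3)
    calc |y^(n+3) * AA β α (n+3)| = |y|^n * |y|^3 * |AA β α (n+3)| := by
          rw [abs_mul, abs_pow, pow_add]
      _ ≤ (1/2)^n * |y|^3 * gg0 β α (n+3) := by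
          have := abs_nonneg y
          have h3 : (0:ℝ) ≤ |y|^3 := by positivity
          have h4 : (0:ℝ) ≤ |y|^n * |y|^3 := by positivity
          have h5 : (0:ℝ) ≤ (1/2:ℝ)^n * |y|^3 := by positivity
          exact mul_le_mul (mul_le_mul h1 le_rfl h3 (by positivity)) h2 (abs_nonneg _) h5
      _ = |y|^3 * (8 * gg β α (n+3)) := by
          rw [gg, hp]; ring
  have hsplit : (∑' n, y^n * AA β α n) - (AA β α 0 + y * AA β α 1 + y^2 * AA β α 2)
      = ∑' n, y^(n+3) * AA β α (n+3) := by
    have hd := Summable.sum_add_tsum_nat_add 3 hsum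
    rw [← hd, Finset.sum_range_succ, Finset.sum_range_succ, Finset.sum_range_one]
    rw [pow_zero, pow_one, one_mul]
    ring
  rw [hsplit]
  have h1 : |∑' n, y^(n+3) * AA β α (n+3)| ≤ ∑' n, |y^(n+3) * AA β α (n+3)| := by
    simpa only [Real.norm_eq_abs] using
      norm_tsum_le_tsum_norm (f := fun n => y^(n+3) * AA β α (n+3))
        (by simpa only [Real.norm_eq_abs] using hsum3a)
  have h2 : ∑' n, |y^(n+3) * AA β α (n+3)| ≤ ∑' n, |y|^3 * (8 * gg β α (n+3)) :=
    hsum3a.tsum_le_tsum hbnd hsumb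
  have h3 : ∑' n, |y|^3 * (8 * gg β α (n+3)) = (8 * ∑' n, gg β α (n+3)) * |y|^3 := by
    rw [tsum_mul_left, tsum_mul_left]; ring
  linarith

lemma not_logconcave {β α : ℝ} (hβ : β ∈ Set.Ioo (0:ℝ) 1) (hα : α ∈ Set.Ioo ((β+1)/2) 1)
    (hc : 1 / Real.Gamma (β - α) ^ 2 < 1 / (Real.Gamma β * Real.Gamma (β - 2 * α))) :
    ¬ LogConcaveOn' (fun x => wright (-α) β (-x)) (Set.Ici 0) := by
  intro hlc
  obtain ⟨hβ0, hβ1⟩ := hβ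
  have hα0 : 0 < α := by have := hα.1; linarith
  have hα1 : α < 1 := hα.2
  -- Gamma signs
  have hGb : 0 < Real.Gamma β := Real.Gamma_pos_of_pos hβ0
  have hGu : Real.Gamma (β - α) < 0 := gneg (hu_mem ⟨hβ0, hβ1⟩ hα)
  have hGv : 0 < Real.Gamma (β - 2*α) := gpos2 (hv_mem ⟨hβ0, hβ1⟩ hα)
  -- coefficients
  have hA0 : AA β α 0 = (Real.Gamma β)⁻¹ := by simp [AA]
  have hA1 : AA β α 1 = (Real.Gamma (β - α))⁻¹ := by simp [AA]
  have hA2 : AA β α 2 = (2 * Real.Gamma (β - 2*α))⁻¹ := by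
    rw [AA, show β - α * (2:ℕ) = β - 2*α by push_cast; ring]
    norm_num
  obtain ⟨A0, hA0d⟩ : ∃ v : ℝ, v = AA β α 0 := ⟨_, rfl⟩
  obtain ⟨A1, hA1d⟩ : ∃ v : ℝ, v = AA β α 1 := ⟨_, rfl⟩
  obtain ⟨A2, hA2d⟩ : ∃ v : ℝ, v = AA β α 2 := ⟨_, rfl⟩
  rw [← hA0d] at hA0
  rw [← hA1d] at hA1
  rw [← hA2d] at hA2
  have hA0p : 0 < A0 := by rw [hA0]; positivity
  have hA1n : A1 < 0 := by rw [hA1]; exact inv_neg''.mpr hGu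
  have hA2p : 0 < A2 := by rw [hA2]; positivity
  -- key coefficient inequality
  have hcc : A1^2 < 2*A0*A2 := by
    have e1 : A1^2 = 1/Real.Gamma (β - α)^2 := by
      rw [hA1, one_div, inv_pow]
    have e2 : 2*A0*A2 = 1/(Real.Gamma β * Real.Gamma (β - 2*α)) := by
      rw [hA0, hA2]
      field_simp
    rw [e1, e2]; exact hc
  obtain ⟨M, hM0, hest⟩ := AA_est hβ0 hβ1 hα0 hα1
  -- rewrite wright as the power series in AA
  have hw : ∀ x : ℝ, wright (-α) β (-x) = ∑' n, (-x)^n * AA β α n := by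
    intro x
    rw [wright]
    apply tsum_congr
    intro n
    rw [AA, div_eq_mul_inv, show β + -α * n = β - α * n by ring]
  -- constants
  obtain ⟨c, hcd⟩ : ∃ v : ℝ, v = 2*A0*A2 - A1^2 := ⟨_, rfl⟩
  have hcpos : 0 < c := by rw [hcd]; linarith
  obtain ⟨K, hKd⟩ : ∃ v : ℝ, v = (2*A0*M + 8*A0*M - 2*A1*A2) + (A2^2 - 2*A1*M) + 2*A2*M + M^2 :=
    ⟨_, rfl⟩
  have hK0 : 0 ≤ K := by
    rw [hKd]
    linarith only [mul_nonneg hA0p.le hM0, mul_nonneg (neg_nonneg.mpr hA1n.le) hA2p.le,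
      mul_nonneg (neg_nonneg.mpr hA1n.le) hM0, mul_nonneg hA2p.le hM0, sq_nonneg A2, sq_nonneg M]
  have hK1 : 0 < K + 1 := by linarith
  obtain ⟨x0, hx0pos, hx04, hxc', hxA'⟩ :
      ∃ x0 : ℝ, 0 < x0 ∧ x0 ≤ 1/4 ∧ x0 * (2*(K+1)) ≤ c ∧ x0 * (8*M+1) ≤ A0 := by
    refine ⟨min (1/4 : ℝ) (min (c/(2*(K+1))) (A0/(8*M+1))), ?_, min_le_left _ _, ?_, ?_⟩
    · apply lt_min (by norm_num)
      exact lt_min (by positivity) (by positivity)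
    · rw [← le_div_iff₀ (by positivity)]
      exact le_trans (min_le_right _ _) (min_le_left _ _)
    · rw [← le_div_iff₀ (by positivity)]
      exact le_trans (min_le_right _ _) (min_le_right _ _)
  have hx01 : x0 ≤ 1 := by linarith
  -- estimates at -x0, -2x0, 0
  have habs1 : |(-x0)| ≤ 1/2 := by rw [abs_neg, abs_of_pos hx0pos]; linarith
  have habs2 : |(-(2*x0))| ≤ 1/2 := by rw [abs_neg, abs_of_pos (by linarith)]; linarith
  have habs0 : |(0:ℝ)| ≤ 1/2 := by norm_num
  obtain ⟨_, he1⟩ := hest (-x0) habs1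
  obtain ⟨_, he2⟩ := hest (-(2*x0)) habs2
  obtain ⟨_, he0⟩ := hest 0 habs0
  -- f values
  have hf0 : wright (-α) β (-(0:ℝ)) = A0 := by
    have h0 : |(∑' n, (0:ℝ)^n * AA β α n)
        - (AA β α 0 + 0 * AA β α 1 + 0^2 * AA β α 2)| ≤ 0 := by
      have := he0
      rw [abs_zero] at this
      simpa using this
    have heq := sub_eq_zero.mp (abs_eq_zero.mp (le_antisymm h0 (abs_nonneg _)))
    rw [hw 0, neg_zero, heq, ← hA0d, ← hA1d, ← hA2d]
    ring
  have hfx : wright (-α) β (-x0) = ∑' n, (-x0)^n * AA β α n := hw x0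
  have hf2x : wright (-α) β (-(2*x0)) = ∑' n, (-(2*x0))^n * AA β α n := hw (2*x0)
  have he1' : |wright (-α) β (-x0) - (A0 - A1*x0 + A2*x0^2)| ≤ M*x0^3 := by
    have h := he1
    rw [← hA0d, ← hA1d, ← hA2d,
      show A0 + (-x0)*A1 + (-x0)^2*A2 = A0 - A1*x0 + A2*x0^2 from by ring,
      abs_neg, abs_of_pos hx0pos, ← hfx] at h
    exact h
  have he2' : |wright (-α) β (-(2*x0)) - (A0 - 2*A1*x0 + 4*A2*x0^2)| ≤ 8*M*x0^3 := by
    have h := he2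
    rw [← hA0d, ← hA1d, ← hA2d,
      show A0 + (-(2*x0))*A1 + (-(2*x0))^2*A2 = A0 - 2*A1*x0 + 4*A2*x0^2 from by ring,
      abs_neg, abs_of_pos (by linarith : (0:ℝ) < 2*x0), ← hf2x,
      show M*(2*x0)^3 = 8*M*x0^3 from by ring] at h
    exact h
  obtain ⟨hl1, hr1⟩ := abs_le.mp he1'
  obtain ⟨hl2, hr2⟩ := abs_le.mp he2'
  have hx3 : x0^3 ≤ x0 := by
    calc x0^3 = x0 * x0^2 := by ring
      _ ≤ x0 * 1 := mul_le_mul_of_nonneg_left (pow_le_one₀ hx0pos.le hx01) hx0pos.le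
      _ = x0 := mul_one _
  have hf2pos : 0 < wright (-α) β (-(2*x0)) := by
    have hb1 : 0 ≤ -2*A1*x0 := by
      have := mul_nonneg (neg_nonneg.mpr hA1n.le) hx0pos.le
      linarith only [this]
    have hb2 : 0 ≤ 4*A2*x0^2 := by positivity
    have hb3 : 8*M*x0^3 ≤ 8*M*x0 := by
      have := mul_le_mul_of_nonneg_left hx3 (by positivity : (0:ℝ) ≤ 8*M)
      linarith only [this]
    linarith only [hl2, hb1, hb2, hb3, hxA', hx0pos]
  have hf0pos : 0 < wright (-α) β (-(0:ℝ)) := by rw [hf0]; exact hA0p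
  -- apply log-concavity with x = 0, y = 2 x0, t = 1/2
  have hkey0 := hlc 0 Set.self_mem_Ici (2*x0) (Set.mem_Ici.mpr (by linarith)) (1/2)
    ⟨by norm_num, by norm_num⟩
  have harg : (1 - (1/2:ℝ)) * 0 + (1/2)*(2*x0) = x0 := by ring
  have hkey : wright (-α) β (-x0) ≥
      wright (-α) β (-(0:ℝ)) ^ ((1:ℝ)/2) * wright (-α) β (-(2*x0)) ^ ((1:ℝ)/2) := by
    simp only [] at hkey0
    rw [harg, show (1:ℝ) - 1/2 = 1/2 from by norm_num] at hkey0
    exact hkey0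
  have hrpos : 0 < wright (-α) β (-(0:ℝ)) ^ ((1:ℝ)/2) * wright (-α) β (-(2*x0)) ^ ((1:ℝ)/2) :=
    mul_pos (Real.rpow_pos_of_pos hf0pos _) (Real.rpow_pos_of_pos hf2pos _)
  have hsqeq : (wright (-α) β (-(0:ℝ)) ^ ((1:ℝ)/2) * wright (-α) β (-(2*x0)) ^ ((1:ℝ)/2))^2
      = wright (-α) β (-(0:ℝ)) * wright (-α) β (-(2*x0)) := by
    rw [mul_pow, ← Real.rpow_natCast (wright (-α) β (-(0:ℝ)) ^ ((1:ℝ)/2)) 2,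
      ← Real.rpow_natCast (wright (-α) β (-(2*x0)) ^ ((1:ℝ)/2)) 2,
      ← Real.rpow_mul hf0pos.le, ← Real.rpow_mul hf2pos.le]
    norm_num
  have hfx0pos : 0 < wright (-α) β (-x0) := lt_of_lt_of_le hrpos hkey
  have hsq : wright (-α) β (-(0:ℝ)) * wright (-α) β (-(2*x0)) ≤ wright (-α) β (-x0)^2 := by
    have h2 := pow_le_pow_left₀ hrpos.le hkey 2
    rw [hsqeq] at h2
    exact h2
  -- polynomial bound
  have hfu : wright (-α) β (-x0) ≤ A0 - A1*x0 + A2*x0^2 + M*x0^3 := by linarith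
  have hfl : A0 - 2*A1*x0 + 4*A2*x0^2 - 8*M*x0^3 ≤ wright (-α) β (-(2*x0)) := by linarith
  have hident : (A0 - A1*x0 + A2*x0^2 + M*x0^3)^2 - A0*(A0 - 2*A1*x0 + 4*A2*x0^2 - 8*M*x0^3)
      = -(c*x0^2) + x0^3*((2*A0*M + 8*A0*M - 2*A1*A2) + (A2^2 - 2*A1*M)*x0
        + 2*A2*M*x0^2 + M^2*x0^3) := by
    rw [hcd]; ring
  have hparen : (2*A0*M + 8*A0*M - 2*A1*A2) + (A2^2 - 2*A1*M)*x0
      + 2*A2*M*x0^2 + M^2*x0^3 ≤ K := by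
    have t1 : (A2^2 - 2*A1*M)*x0 ≤ A2^2 - 2*A1*M :=
      mul_le_of_le_one_right
        (by linarith only [mul_nonneg (neg_nonneg.mpr hA1n.le) hM0, sq_nonneg A2]) hx01
    have t2 : 2*A2*M*x0^2 ≤ 2*A2*M :=
      mul_le_of_le_one_right (by positivity) (pow_le_one₀ hx0pos.le hx01)
    have t3 : M^2*x0^3 ≤ M^2 :=
      mul_le_of_le_one_right (sq_nonneg M) (pow_le_one₀ hx0pos.le hx01)
    rw [hKd]; linarith
  have hmain : (A0 - A1*x0 + A2*x0^2 + M*x0^3)^2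
      < A0*(A0 - 2*A1*x0 + 4*A2*x0^2 - 8*M*x0^3) := by
    have h1 : x0^3*((2*A0*M + 8*A0*M - 2*A1*A2) + (A2^2 - 2*A1*M)*x0
        + 2*A2*M*x0^2 + M^2*x0^3) ≤ x0^3*K :=
      mul_le_mul_of_nonneg_left hparen (by positivity)
    have h2 : 0 ≤ c - 2*(K*x0) := by linarith only [hxc', hx0pos]
    have h3 : 0 ≤ (c - 2*(K*x0)) * x0^2 := mul_nonneg h2 (sq_nonneg x0)
    linarith only [hident, h1, h3, mul_pos hcpos (pow_pos hx0pos 2)]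
  have hfinal : wright (-α) β (-x0)^2 < wright (-α) β (-(0:ℝ)) * wright (-α) β (-(2*x0)) := by
    calc wright (-α) β (-x0)^2 ≤ (A0 - A1*x0 + A2*x0^2 + M*x0^3)^2 :=
          pow_le_pow_left₀ hfx0pos.le hfu 2
      _ < A0*(A0 - 2*A1*x0 + 4*A2*x0^2 - 8*M*x0^3) := hmain
      _ ≤ A0 * wright (-α) β (-(2*x0)) := mul_le_mul_of_nonneg_left hfl hA0p.le
      _ = wright (-α) β (-(0:ℝ)) * wright (-α) β (-(2*x0)) := by rw [hf0]
  linarith only [hsq, hfinal]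


/-- Theorem D (a): for `β ∈ (0,1)` there exists a unique `α_*(β) ∈ ((β+1)/2, 1)`
solving `1/Γ(β-α)² = 1/(Γ(β)Γ(β-2α))`, and for every `α ∈ (α_*(β), 1)` the function
`x ↦ φ(-α, β, -x)` is not log-concave on `[0,∞)`. -/
theorem wright_not_logConcave (β : ℝ) (hβ : β ∈ Set.Ioo (0 : ℝ) 1) :
    ∃ αs : ℝ, αs ∈ Set.Ioo ((β + 1) / 2) 1 ∧
      1 / Real.Gamma (β - αs) ^ 2 = 1 / (Real.Gamma β * Real.Gamma (β - 2 * αs)) ∧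
      (∀ a ∈ Set.Ioo ((β + 1) / 2) 1,
        1 / Real.Gamma (β - a) ^ 2 = 1 / (Real.Gamma β * Real.Gamma (β - 2 * a)) →
          a = αs) ∧
      ∀ α : ℝ, αs < α → α < 1 →
        ¬ LogConcaveOn' (fun x => wright (-α) β (-x)) (Set.Ici 0) := by
  obtain ⟨αs, hαs_mem, hFαs⟩ := exists_root hβ
  have heqs : 1 / Real.Gamma (β - αs) ^ 2 = 1 / (Real.Gamma β * Real.Gamma (β - 2 * αs)) := by
    have := hFαs
    rw [FF] at this
    linarith
  have hL0 : LL β αs = 0 := (LL_eq_zero_iff hβ hαs_mem).mpr heqs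
  refine ⟨αs, hαs_mem, heqs, ?_, ?_⟩
  · intro a ha heq
    have h1 : LL β a = 0 := (LL_eq_zero_iff hβ ha).mpr heq
    exact (LL_strictMono hβ).injOn ha hαs_mem (h1.trans hL0.symm)
  · intro α hα1 hα2
    have hαmem : α ∈ Set.Ioo ((β+1)/2) 1 := ⟨lt_trans hαs_mem.1 hα1, hα2⟩
    have hLpos : 0 < LL β α := by
      have := LL_strictMono hβ hαs_mem hαmem hα1
      linarith [hL0]
    exact not_logconcave hβ hαmem (LL_pos_lt hβ hαmem hLpos)
end

section
/- For every α > 0 and β > 0, the function x ↦ 1 / E_{α,β}(x) is convex on [0,∞), where E_{α,β}(x) = ∑_{n=0}^∞ x^n / Γ(β + αn); here E_{α,β}(x) > 0 for all x ≥ 0, so the reciprocal is well defined. -/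
open Real Filter

lemma logGamma_convex_use {x y w1 w2 : ℝ} (hx : 0 < x) (hy : 0 < y) (h1 : 0 ≤ w1)
    (h2 : 0 ≤ w2) (h : w1 + w2 = 1) :
    Real.log (Real.Gamma (w1 * x + w2 * y)) ≤
      w1 * Real.log (Real.Gamma x) + w2 * Real.log (Real.Gamma y) := by
  have := Real.convexOn_log_Gamma.2 (Set.mem_Ioi.2 hx) (Set.mem_Ioi.2 hy) h1 h2 h
  simpa [smul_eq_mul] using this

lemma gamma_interp {a b t : ℝ} (ha : 0 < a) (hab : a ≤ b) (ht : 0 ≤ t) :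
    Real.Gamma (a + t) * Real.Gamma b ≤ Real.Gamma a * Real.Gamma (b + t) := by
  rcases eq_or_lt_of_le ht with rfl | ht
  · simp [mul_comm]
  have hD : 0 < b + t - a := by linarith
  have hμ0 : 0 ≤ (b - a) / (b + t - a) := div_nonneg (by linarith) hD.le
  have hν0 : 0 ≤ t / (b + t - a) := div_nonneg ht.le hD.le
  have hsum : (b - a) / (b + t - a) + t / (b + t - a) = 1 := by
    rw [← add_div, div_eq_one_iff_eq hD.ne']; ring
  have hb : 0 < b := lt_of_lt_of_le ha hab
  have hbt : (0:ℝ) < b + t := by linarith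
  have hat : (0:ℝ) < a + t := by linarith
  have h1 := logGamma_convex_use ha hbt hμ0 hν0 hsum
  have h2 := logGamma_convex_use ha hbt hν0 hμ0 (by linarith)
  have e1 : (b - a) / (b + t - a) * a + t / (b + t - a) * (b + t) = a + t := by
    field_simp; ring
  have e2 : t / (b + t - a) * a + (b - a) / (b + t - a) * (b + t) = b := by
    field_simp; ring
  rw [e1] at h1
  rw [e2] at h2
  have hsumlog : Real.log (Real.Gamma (a + t)) + Real.log (Real.Gamma b) ≤
      Real.log (Real.Gamma a) + Real.log (Real.Gamma (b + t)) := by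
    have hadd := add_le_add h1 h2
    have heq : ((b - a) / (b + t - a) + t / (b + t - a)) *
        (Real.log (Real.Gamma a) + Real.log (Real.Gamma (b + t))) =
        Real.log (Real.Gamma a) + Real.log (Real.Gamma (b + t)) := by rw [hsum, one_mul]
    nlinarith [hadd]
  have gat := Real.Gamma_pos_of_pos hat
  have gb := Real.Gamma_pos_of_pos hb
  have ga := Real.Gamma_pos_of_pos ha
  have gbt := Real.Gamma_pos_of_pos hbt
  calc Real.Gamma (a + t) * Real.Gamma b
      = Real.exp (Real.log (Real.Gamma (a + t)) + Real.log (Real.Gamma b)) := by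
        rw [Real.exp_add, Real.exp_log gat, Real.exp_log gb]
    _ ≤ Real.exp (Real.log (Real.Gamma a) + Real.log (Real.Gamma (b + t))) :=
        Real.exp_le_exp.2 hsumlog
    _ = Real.Gamma a * Real.Gamma (b + t) := by
        rw [Real.exp_add, Real.exp_log ga, Real.exp_log gbt]

lemma gamma_key {α : ℝ} (hα : 0 < α) (hα1 : α ≤ 1) {y : ℝ} (hy : 1 ≤ y) :
    y * Real.Gamma y ≤ Real.Gamma (y + α) * (y + α) ^ (1 - α) := by
  have hy0 : (0:ℝ) < y := by linarith
  have hyα : (0:ℝ) < y + α := by linarith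
  have h := logGamma_convex_use hyα (by linarith : (0:ℝ) < y + 1 + α)
    hα.le (by linarith : (0:ℝ) ≤ 1 - α) (by ring)
  have e1 : α * (y + α) + (1 - α) * (y + 1 + α) = y + 1 := by ring
  rw [e1] at h
  have e2 : Real.Gamma (y + 1 + α) = (y + α) * Real.Gamma (y + α) := by
    rw [show y + 1 + α = (y + α) + 1 by ring, Real.Gamma_add_one hyα.ne']
  have e3 : Real.Gamma (y + 1) = y * Real.Gamma y := Real.Gamma_add_one hy0.ne'
  rw [e2, e3, Real.log_mul hy0.ne' (Real.Gamma_pos_of_pos hy0).ne',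
    Real.log_mul hyα.ne' (Real.Gamma_pos_of_pos hyα).ne'] at h
  have h' : Real.log y + Real.log (Real.Gamma y) ≤
      Real.log (Real.Gamma (y + α)) + Real.log (y + α) * (1 - α) := by nlinarith
  calc y * Real.Gamma y
      = Real.exp (Real.log y + Real.log (Real.Gamma y)) := by
        rw [Real.exp_add, Real.exp_log hy0, Real.exp_log (Real.Gamma_pos_of_pos hy0)]
    _ ≤ Real.exp (Real.log (Real.Gamma (y + α)) + Real.log (y + α) * (1 - α)) :=
        Real.exp_le_exp.2 h'
    _ = Real.Gamma (y + α) * (y + α) ^ (1 - α) := by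
        rw [Real.exp_add, Real.exp_log (Real.Gamma_pos_of_pos hyα), Real.rpow_def_of_pos hyα]

lemma gamma_ratio_eventually : ∀ {α : ℝ}, 0 < α → ∀ M : ℝ,
    ∀ᶠ y in atTop, M * Real.Gamma y ≤ Real.Gamma (y + α) := by
  suffices H : ∀ n : ℕ, ∀ α : ℝ, 0 < α → α ≤ n → ∀ M : ℝ,
      ∀ᶠ y in atTop, M * Real.Gamma y ≤ Real.Gamma (y + α) by
    intro α hα M
    exact H ⌈α⌉₊ α hα (Nat.le_ceil α) M
  intro n
  induction n with
  | zero => intro α hα h0 M; exact absurd (hα.trans_le h0) (by norm_num)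
  | succ n ih =>
    intro α hα hle M
    rcases le_or_gt α 1 with hα1 | hα1
    · -- base case via gamma_key
      set M' := max M 1 with hM'
      have hM'pos : 0 < M' := lt_of_lt_of_le one_pos (le_max_right _ _)
      have hev : ∀ᶠ y in atTop, 2 * M' ≤ (y + α) ^ α := by
        have : Tendsto (fun y : ℝ => (y + α) ^ α) atTop atTop :=
          (tendsto_rpow_atTop hα).comp (tendsto_atTop_add_const_right _ α tendsto_id)
        exact this.eventually_ge_atTop (2 * M')
      filter_upwards [hev, eventually_ge_atTop (1:ℝ)] with y h2M hy
      have hy0 : (0:ℝ) < y := by linarith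
      have hyα : (0:ℝ) < y + α := by linarith
      have key := gamma_key hα hα1 hy
      have hrp : (0:ℝ) < (y + α) ^ (1 - α) := Real.rpow_pos_of_pos hyα _
      have hrpα : (0:ℝ) < (y + α) ^ α := Real.rpow_pos_of_pos hyα _
      have hGy : (0:ℝ) < Real.Gamma y := Real.Gamma_pos_of_pos hy0
      -- M' * (y+α)^(1-α) ≤ y
      have hsplit : (y + α) ^ (1 - α) = (y + α) / (y + α) ^ α := by
        rw [Real.rpow_sub hyα, Real.rpow_one]
      have hstep : M' * (y + α) ^ (1 - α) ≤ y := by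
        rw [hsplit, mul_div_assoc', div_le_iff₀ hrpα]
        have hyα2 : y + α ≤ 2 * y := by linarith
        calc M' * (y + α) ≤ M' * (2 * y) := by nlinarith
          _ = y * (2 * M') := by ring
          _ ≤ y * ((y + α) ^ α) := by nlinarith
      have : M' * Real.Gamma y * (y + α) ^ (1 - α) ≤ Real.Gamma (y + α) * (y + α) ^ (1 - α) := by
        calc M' * Real.Gamma y * (y + α) ^ (1 - α)
            = (M' * (y + α) ^ (1 - α)) * Real.Gamma y := by ring
          _ ≤ y * Real.Gamma y := by nlinarith
          _ ≤ Real.Gamma (y + α) * (y + α) ^ (1 - α) := key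
      have hM'le := (mul_le_mul_iff_of_pos_right hrp).1 this
      calc M * Real.Gamma y ≤ M' * Real.Gamma y := by
            have : M ≤ M' := le_max_left _ _
            nlinarith
        _ ≤ Real.Gamma (y + α) := hM'le
    · -- inductive step
      have hα' : 0 < α - 1 := by linarith
      have hle' : α - 1 ≤ n := by push_cast at hle ⊢; linarith
      have ihev := ih (α - 1) hα' hle' 1
      filter_upwards [ihev, eventually_ge_atTop (max M 1)] with y hy1 hy2
      have hy0 : (0:ℝ) < y := lt_of_lt_of_le one_pos (le_trans (le_max_right _ _) hy2)
      have hGy : (0:ℝ) < Real.Gamma y := Real.Gamma_pos_of_pos hy0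
      have h1 : Real.Gamma (y + α) = (y + (α - 1)) * Real.Gamma (y + (α - 1)) := by
        rw [show y + α = (y + (α - 1)) + 1 by ring]
        exact Real.Gamma_add_one (by positivity)
      rw [h1]
      have hMy : M ≤ y := le_trans (le_max_left _ _) hy2
      have : Real.Gamma y ≤ Real.Gamma (y + (α - 1)) := by linarith [hy1]
      nlinarith [Real.Gamma_pos_of_pos (show (0:ℝ) < y + (α - 1) by linarith)]

open Finset

lemma sum_id_real (n : ℕ) : ∑ p ∈ range n, (p:ℝ) = n * (n - 1) / 2 := by
  induction n with
  | zero => simp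
  | succ n ih => rw [Finset.sum_range_succ, ih]; push_cast; ring

lemma sum_sq_real (n : ℕ) : ∑ p ∈ range n, (p:ℝ)^2 = n * (n - 1) * (2 * n - 1) / 6 := by
  induction n with
  | zero => simp
  | succ n ih => rw [Finset.sum_range_succ, ih]; push_cast; ring

lemma sum_w_zero (M : ℕ) :
    ∑ p ∈ range (M + 1), (6 * (p:ℝ) * ((M:ℝ) - p) - M * ((M:ℝ) - 1)) = 0 := by
  have h1 := sum_id_real (M + 1)
  have h2 := sum_sq_real (M + 1)
  calc ∑ p ∈ range (M + 1), (6 * (p:ℝ) * ((M:ℝ) - p) - M * ((M:ℝ) - 1))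
      = ∑ p ∈ range (M + 1), (6 * (M:ℝ) * (p:ℝ) - 6 * (p:ℝ)^2 - M * ((M:ℝ) - 1)) :=
        Finset.sum_congr rfl (fun p _ => by ring)
    _ = 6 * (M:ℝ) * (∑ p ∈ range (M + 1), (p:ℝ)) - 6 * (∑ p ∈ range (M + 1), (p:ℝ)^2)
        - (M + 1) * ((M:ℝ) * ((M:ℝ) - 1)) := by
        rw [Finset.sum_sub_distrib, Finset.sum_sub_distrib, ← Finset.mul_sum, ← Finset.mul_sum,
          Finset.sum_const, Finset.card_range, nsmul_eq_mul]
        push_cast; ring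
    _ = 0 := by rw [h1, h2]; push_cast; ring

lemma core_nonneg (c : ℕ → ℝ) (hc : ∀ n, 0 < c n)
    (hstep : ∀ p q : ℕ, p ≤ q → c (q + 1) * c p ≤ c (p + 1) * c q) (M : ℕ) :
    0 ≤ ∑ p ∈ range (M + 1),
      (2 * (p:ℝ) * ((M:ℝ) - p) - ((M:ℝ) - p) * ((M:ℝ) - p - 1)) * (c p * c (M - p)) := by
  classical
  set Mr : ℝ := (M:ℝ) with hMr
  set D : ℕ → ℝ := fun p => c p * c (M - p) with hD
  have hDsymm : ∀ p, p ≤ M → D (M - p) = D p := by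
    intro p hp
    simp only [hD]
    rw [Nat.sub_sub_self hp, mul_comm]
  have hDstep : ∀ r, 2 * (r + 1) ≤ M → D r ≤ D (r + 1) := by
    intro r hr
    have h1 : r ≤ M - r - 1 := by omega
    have h2 := hstep r (M - r - 1) h1
    have e1 : M - r - 1 + 1 = M - r := by omega
    have e2 : M - r - 1 = M - (r + 1) := by omega
    rw [e1, e2] at h2
    simp only [hD]
    calc c r * c (M - r) = c (M - r) * c r := mul_comm _ _
      _ ≤ c (r + 1) * c (M - (r + 1)) := h2
  have hDmono : ∀ j, 2 * j ≤ M → ∀ i, i ≤ j → D i ≤ D j := by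
    intro j
    induction j with
    | zero => intro _ i hi; rw [Nat.le_zero.1 hi]
    | succ j ih =>
      intro hj2 i hi
      rcases Nat.lt_succ_iff_lt_or_eq.1 (Nat.lt_succ_of_le hi) with h | rfl
      · exact le_trans (ih (by omega) i (by omega)) (hDstep j hj2)
      · exact le_refl _
  have hDmin : ∀ p, p ≤ M → ∃ i, i ≤ M ∧ 2 * i ≤ M ∧ D i = D p ∧
      (i:ℝ) * (Mr - i) = (p:ℝ) * (Mr - p) := by
    intro p hp
    rcases le_or_gt (2 * p) M with h | h
    · exact ⟨p, hp, h, rfl, rfl⟩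
    · refine ⟨M - p, by omega, by omega, hDsymm p hp, ?_⟩
      rw [Nat.cast_sub hp, hMr]; ring
  set T : Finset ℕ := (range (M + 1)).filter
    (fun p => Mr * (Mr - 1) ≤ 6 * (p:ℝ) * (Mr - p)) with hT
  have hTne : T.Nonempty := by
    refine ⟨M / 2, Finset.mem_filter.2 ⟨Finset.mem_range.2 (by omega), ?_⟩⟩
    have hA : M ≤ 2 * (M / 2) + 1 := by omega
    have hB : 2 * (M / 2) ≤ M := by omega
    have hA' : Mr ≤ 2 * ((M / 2 : ℕ):ℝ) + 1 := by rw [hMr]; exact_mod_cast hA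
    have hB' : 2 * ((M / 2 : ℕ):ℝ) ≤ Mr := by rw [hMr]; exact_mod_cast hB
    have hq0 : (0:ℝ) ≤ ((M / 2 : ℕ):ℝ) := Nat.cast_nonneg _
    nlinarith [mul_nonneg (sub_nonneg.2 hB') hq0, sq_nonneg (Mr - 2 * ((M / 2 : ℕ):ℝ)),
      mul_nonneg (sub_nonneg.2 hB') (sub_nonneg.2 hB')]
  set K : ℝ := T.inf' hTne D with hK
  obtain ⟨q0, hq0T, hKq0⟩ := Finset.exists_mem_eq_inf' hTne D
  have hq0M : q0 ≤ M := by
    have := (Finset.mem_filter.1 hq0T).1; rw [Finset.mem_range] at this; omega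
  have hq0ineq : Mr * (Mr - 1) ≤ 6 * (q0:ℝ) * (Mr - q0) := (Finset.mem_filter.1 hq0T).2
  have hpt : ∀ p ∈ range (M + 1),
      0 ≤ (6 * (p:ℝ) * (Mr - p) - Mr * (Mr - 1)) * (D p - K) := by
    intro p hp
    have hpM : p ≤ M := by rw [Finset.mem_range] at hp; omega
    rcases le_or_gt (Mr * (Mr - 1)) (6 * (p:ℝ) * (Mr - p)) with h | h
    · have hpT : p ∈ T := Finset.mem_filter.2 ⟨hp, h⟩
      have : K ≤ D p := Finset.inf'_le D hpT
      exact mul_nonneg (by linarith) (by linarith)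
    · -- D p ≤ D q0 = K
      obtain ⟨i, hiM, hi2, hDi, hieq⟩ := hDmin p hpM
      obtain ⟨j, hjM, hj2, hDj, hjeq⟩ := hDmin q0 hq0M
      have hij : i ≤ j := by
        by_contra hji
        push_neg at hji
        have hcast : (j:ℝ) < (i:ℝ) := by exact_mod_cast hji
        have h2i : 2 * (i:ℝ) ≤ Mr := by rw [hMr]; exact_mod_cast hi2
        have hjnn : (0:ℝ) ≤ (j:ℝ) := Nat.cast_nonneg _
        have hmono : (j:ℝ) * (Mr - j) ≤ (i:ℝ) * (Mr - i) := by nlinarith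
        rw [hieq, hjeq] at hmono
        nlinarith
      have hDpq : D p ≤ D q0 := by
        calc D p = D i := hDi.symm
          _ ≤ D j := hDmono j hj2 i hij
          _ = D q0 := hDj
      have hDK : D p - K ≤ 0 := by rw [hK, hKq0]; linarith
      exact mul_nonneg_of_nonpos_of_nonpos (by linarith : 6 * (p:ℝ) * (Mr - ↑p) - Mr * (Mr - 1) ≤ 0) hDK
  have hsum1 : 0 ≤ ∑ p ∈ range (M + 1), (6 * (p:ℝ) * (Mr - p) - Mr * (Mr - 1)) * (D p - K) :=
    Finset.sum_nonneg hpt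
  have hsum2 : ∑ p ∈ range (M + 1), (6 * (p:ℝ) * (Mr - p) - Mr * (Mr - 1)) * (D p - K)
      = ∑ p ∈ range (M + 1), (6 * (p:ℝ) * (Mr - p) - Mr * (Mr - 1)) * D p := by
    rw [show (∑ p ∈ range (M + 1), (6 * (p:ℝ) * (Mr - p) - Mr * (Mr - 1)) * (D p - K)) =
      (∑ p ∈ range (M + 1), ((6 * (p:ℝ) * (Mr - p) - Mr * (Mr - 1)) * D p
        - (6 * (p:ℝ) * (Mr - p) - Mr * (Mr - 1)) * K)) from
      Finset.sum_congr rfl (fun p _ => by ring)]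
    rw [Finset.sum_sub_distrib, ← Finset.sum_mul, sum_w_zero M]
    simp [hMr]
  have hW : 0 ≤ ∑ p ∈ range (M + 1), (6 * (p:ℝ) * (Mr - p) - Mr * (Mr - 1)) * D p := by
    rw [← hsum2]; exact hsum1
  -- reflection
  have hrefl : ∑ p ∈ range (M + 1),
      (2 * (p:ℝ) * (Mr - p) - (Mr - p) * (Mr - p - 1)) * D p
      = ∑ p ∈ range (M + 1), (2 * (Mr - p) * (p:ℝ) - (p:ℝ) * ((p:ℝ) - 1)) * D p := by
    rw [← Finset.sum_range_reflect]
    refine Finset.sum_congr rfl (fun p hp => ?_)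
    have hpM : p ≤ M := by rw [Finset.mem_range] at hp; omega
    have e0 : M + 1 - 1 - p = M - p := by omega
    rw [e0]
    have e1 : ((M - p : ℕ):ℝ) = Mr - p := by rw [Nat.cast_sub hpM, hMr]
    rw [hDsymm p hpM, e1]
    ring_nf
  have hcomb : ∀ p ∈ range (M + 1),
      (2 * (p:ℝ) * (Mr - p) - (Mr - p) * (Mr - p - 1)) * D p
        + (2 * (Mr - p) * (p:ℝ) - (p:ℝ) * ((p:ℝ) - 1)) * D p
      = (6 * (p:ℝ) * (Mr - p) - Mr * (Mr - 1)) * D p := fun p _ => by ring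
  have htwice : 2 * ∑ p ∈ range (M + 1),
      (2 * (p:ℝ) * (Mr - p) - (Mr - p) * (Mr - p - 1)) * D p
      = ∑ p ∈ range (M + 1), (6 * (p:ℝ) * (Mr - p) - Mr * (Mr - 1)) * D p := by
    rw [two_mul]
    nth_rewrite 2 [hrefl]
    rw [← Finset.sum_add_distrib]
    exact Finset.sum_congr rfl hcomb
  have := hW
  rw [← htwice] at this
  simp only [hD, hMr] at this ⊢
  linarith

/-! ### Mittag-Leffler machinery -/

open Filter Finset

noncomputable def mlc (α β : ℝ) (n : ℕ) : ℝ := (Real.Gamma (β + α * n))⁻¹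

section ML

variable {α β : ℝ}

lemma mlc_arg_pos (hα : 0 < α) (hβ : 0 < β) (n : ℕ) : 0 < β + α * n := by positivity

lemma mlc_pos (hα : 0 < α) (hβ : 0 < β) (n : ℕ) : 0 < mlc α β n :=
  inv_pos.2 (Real.Gamma_pos_of_pos (mlc_arg_pos hα hβ n))

lemma mlc_step (hα : 0 < α) (hβ : 0 < β) :
    ∀ p q : ℕ, p ≤ q → mlc α β (q + 1) * mlc α β p ≤ mlc α β (p + 1) * mlc α β q := by
  intro p q hpq
  have ha : 0 < β + α * p := mlc_arg_pos hα hβ p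
  have hb : 0 < β + α * q := mlc_arg_pos hα hβ q
  have hab : β + α * p ≤ β + α * q := by
    have : (p:ℝ) ≤ q := by exact_mod_cast hpq
    nlinarith
  have ht := gamma_interp ha hab hα.le
  have e1 : β + α * ((p + 1 : ℕ):ℝ) = (β + α * p) + α := by push_cast; ring
  have e2 : β + α * ((q + 1 : ℕ):ℝ) = (β + α * q) + α := by push_cast; ring
  unfold mlc
  rw [e1, e2, ← mul_inv, ← mul_inv]
  apply inv_anti₀
  · exact mul_pos (Real.Gamma_pos_of_pos (by linarith : (0:ℝ) < β + α * p + α))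
      (Real.Gamma_pos_of_pos hb)
  · calc Real.Gamma (β + α * p + α) * Real.Gamma (β + α * q)
        ≤ Real.Gamma (β + α * p) * Real.Gamma (β + α * q + α) := ht
      _ = Real.Gamma (β + α * q + α) * Real.Gamma (β + α * p) := mul_comm _ _

lemma mlc_ratio (hα : 0 < α) (hβ : 0 < β) (M : ℝ) :
    ∀ᶠ n : ℕ in atTop, M * Real.Gamma (β + α * n) ≤ Real.Gamma ((β + α * n) + α) := by
  have ht : Tendsto (fun n : ℕ => β + α * n) atTop atTop := by
    apply Filter.tendsto_atTop_add_const_left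
    exact Filter.Tendsto.const_mul_atTop hα tendsto_natCast_atTop_atTop
  exact ht.eventually (gamma_ratio_eventually hα M)

lemma ml_summable (hα : 0 < α) (hβ : 0 < β) (x : ℝ) :
    Summable (fun n : ℕ => mlc α β n * x ^ n) := by
  apply summable_of_ratio_norm_eventually_le (r := 1/2) (by norm_num)
  filter_upwards [mlc_ratio hα hβ (2 * |x| + 1)] with n hn
  have hg1 : 0 < Real.Gamma (β + α * n) := Real.Gamma_pos_of_pos (mlc_arg_pos hα hβ n)
  have hg2 : 0 < Real.Gamma ((β + α * n) + α) :=
    Real.Gamma_pos_of_pos (by nlinarith [mlc_arg_pos hα hβ n])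
  have e1 : β + α * ((n + 1 : ℕ):ℝ) = (β + α * n) + α := by push_cast; ring
  rw [Real.norm_eq_abs, Real.norm_eq_abs, abs_mul, abs_mul, abs_pow, abs_pow,
    abs_of_pos (mlc_pos hα hβ (n+1)), abs_of_pos (mlc_pos hα hβ n)]
  unfold mlc
  rw [e1]
  have lhs_eq : (Real.Gamma ((β + α * n) + α))⁻¹ * |x| ^ (n+1)
      = |x| ^ (n+1) / Real.Gamma ((β + α * n) + α) := by ring
  have rhs_eq : 1/2 * ((Real.Gamma (β + α * n))⁻¹ * |x| ^ n)
      = (|x| ^ n / 2) / Real.Gamma (β + α * n) := by ring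
  rw [lhs_eq, rhs_eq, div_le_div_iff₀ hg2 hg1]
  have h3 := mul_le_mul_of_nonneg_left hn (pow_nonneg (abs_nonneg x) n)
  have h4 : (0:ℝ) ≤ |x| ^ n * Real.Gamma (β + α * n) :=
    mul_nonneg (pow_nonneg (abs_nonneg x) n) hg1.le
  have h5 : |x| ^ (n+1) = |x| ^ n * |x| := pow_succ _ _
  nlinarith

lemma nat_le_two_pow (n : ℕ) : (n:ℝ) ≤ 2 ^ n := by
  have := Nat.lt_two_pow_self (n := n)
  exact_mod_cast this.le

lemma ml_summable_d1 (hα : 0 < α) (hβ : 0 < β) {R : ℝ} (hR : 0 ≤ R) :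
    Summable (fun n : ℕ => (n:ℝ) * mlc α β n * R ^ (n - 1)) := by
  apply Summable.of_nonneg_of_le
    (fun n => mul_nonneg (mul_nonneg (Nat.cast_nonneg n) (mlc_pos hα hβ n).le)
      (pow_nonneg hR _))
    (fun n => ?_) ((ml_summable hα hβ (2 * (R + 1))))
  have hR1 : (1:ℝ) ≤ R + 1 := by linarith
  have h1 : R ^ (n - 1) ≤ (R + 1) ^ n := by
    calc R ^ (n - 1) ≤ (R + 1) ^ (n - 1) := pow_le_pow_left₀ hR (by linarith) _
      _ ≤ (R + 1) ^ n := pow_le_pow_right₀ hR1 (Nat.sub_le n 1)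
  have h2 : (n:ℝ) ≤ 2 ^ n := nat_le_two_pow n
  have hc := (mlc_pos hα hβ n).le
  calc (n:ℝ) * mlc α β n * R ^ (n - 1)
      ≤ 2 ^ n * mlc α β n * (R + 1) ^ n := by
        apply mul_le_mul
        · exact mul_le_mul_of_nonneg_right h2 hc
        · exact h1
        · positivity
        · positivity
    _ = mlc α β n * (2 * (R + 1)) ^ n := by rw [mul_pow]; ring

lemma ml_summable_d2 (hα : 0 < α) (hβ : 0 < β) {R : ℝ} (hR : 0 ≤ R) :
    Summable (fun n : ℕ => (n:ℝ) * ((n - 1 : ℕ):ℝ) * mlc α β n * R ^ (n - 2)) := by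
  apply Summable.of_nonneg_of_le
    (fun n => mul_nonneg (mul_nonneg (mul_nonneg (Nat.cast_nonneg n) (Nat.cast_nonneg _))
      (mlc_pos hα hβ n).le) (pow_nonneg hR _))
    (fun n => ?_) ((ml_summable hα hβ (4 * (R + 1))))
  have hR1 : (1:ℝ) ≤ R + 1 := by linarith
  have h1 : R ^ (n - 2) ≤ (R + 1) ^ n := by
    calc R ^ (n - 2) ≤ (R + 1) ^ (n - 2) := pow_le_pow_left₀ hR (by linarith) _
      _ ≤ (R + 1) ^ n := pow_le_pow_right₀ hR1 (Nat.sub_le n 2)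
  have h2 : (n:ℝ) ≤ 2 ^ n := nat_le_two_pow n
  have h2' : ((n - 1 : ℕ):ℝ) ≤ 2 ^ n := by
    calc ((n - 1 : ℕ):ℝ) ≤ (n:ℝ) := by exact_mod_cast Nat.sub_le n 1
      _ ≤ 2 ^ n := h2
  have hc := (mlc_pos hα hβ n).le
  calc (n:ℝ) * ((n - 1 : ℕ):ℝ) * mlc α β n * R ^ (n - 2)
      ≤ (2 ^ n * 2 ^ n) * mlc α β n * (R + 1) ^ n := by
        apply mul_le_mul
        · apply mul_le_mul_of_nonneg_right _ hc
          apply mul_le_mul h2 h2' (Nat.cast_nonneg _) (by positivity)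
        · exact h1
        · positivity
        · positivity
    _ = mlc α β n * (4 * (R + 1)) ^ n := by
        rw [mul_pow, show (4:ℝ) = 2 * 2 by norm_num, mul_pow]; ring

noncomputable def mlF (α β x : ℝ) : ℝ := ∑' n : ℕ, mlc α β n * x ^ n
noncomputable def mlF1 (α β x : ℝ) : ℝ := ∑' n : ℕ, (n:ℝ) * mlc α β n * x ^ (n - 1)
noncomputable def mlF2 (α β x : ℝ) : ℝ :=
  ∑' n : ℕ, (n:ℝ) * ((n - 1 : ℕ):ℝ) * mlc α β n * x ^ (n - 2)

lemma mlF_hasDeriv (hα : 0 < α) (hβ : 0 < β) (x : ℝ) :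
    HasDerivAt (mlF α β) (mlF1 α β x) x := by
  have hxR : x ∈ Set.Ioo (-(|x| + 1)) (|x| + 1) :=
    ⟨by linarith [neg_abs_le x], by linarith [le_abs_self x]⟩
  have h0R : (0:ℝ) ∈ Set.Ioo (-(|x| + 1)) (|x| + 1) :=
    ⟨by linarith [abs_nonneg x], by positivity⟩
  exact hasDerivAt_tsum_of_isPreconnected
    (g := fun (n : ℕ) (y : ℝ) => mlc α β n * y ^ n)
    (g' := fun (n : ℕ) (y : ℝ) => (n:ℝ) * mlc α β n * y ^ (n - 1))
    (ml_summable_d1 hα hβ (by positivity : (0:ℝ) ≤ |x| + 1)) isOpen_Ioo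
    (convex_Ioo _ _).isPreconnected
    (fun n y _ => by
      have := (hasDerivAt_pow n y).const_mul (mlc α β n)
      refine this.congr_deriv ?_
      ring)
    (fun n y hy => by
      rw [Real.norm_eq_abs, abs_mul, abs_mul, abs_pow,
        Nat.abs_cast, abs_of_pos (mlc_pos hα hβ n)]
      have hy' : |y| ≤ |x| + 1 := by
        rw [abs_le]; exact ⟨hy.1.le, hy.2.le⟩
      exact mul_le_mul_of_nonneg_left
        (pow_le_pow_left₀ (abs_nonneg y) hy' _)
        (mul_nonneg (Nat.cast_nonneg n) (mlc_pos hα hβ n).le))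
    h0R (ml_summable hα hβ 0) hxR

lemma mlF1_hasDeriv (hα : 0 < α) (hβ : 0 < β) (x : ℝ) :
    HasDerivAt (mlF1 α β) (mlF2 α β x) x := by
  have hxR : x ∈ Set.Ioo (-(|x| + 1)) (|x| + 1) :=
    ⟨by linarith [neg_abs_le x], by linarith [le_abs_self x]⟩
  have h0R : (0:ℝ) ∈ Set.Ioo (-(|x| + 1)) (|x| + 1) :=
    ⟨by linarith [abs_nonneg x], by positivity⟩
  exact hasDerivAt_tsum_of_isPreconnected
    (g := fun (n : ℕ) (y : ℝ) => (n:ℝ) * mlc α β n * y ^ (n - 1))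
    (g' := fun (n : ℕ) (y : ℝ) => (n:ℝ) * ((n - 1 : ℕ):ℝ) * mlc α β n * y ^ (n - 2))
    (ml_summable_d2 hα hβ (by positivity : (0:ℝ) ≤ |x| + 1)) isOpen_Ioo
    (convex_Ioo _ _).isPreconnected
    (fun n y _ => by
      have := (hasDerivAt_pow (n - 1) y).const_mul ((n:ℝ) * mlc α β n)
      refine this.congr_deriv ?_
      have e : n - 1 - 1 = n - 2 := by omega
      rw [e]
      ring)
    (fun n y hy => by
      rw [Real.norm_eq_abs, abs_mul, abs_mul, abs_mul, abs_pow,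
        Nat.abs_cast, Nat.abs_cast, abs_of_pos (mlc_pos hα hβ n)]
      have hy' : |y| ≤ |x| + 1 := by
        rw [abs_le]; exact ⟨hy.1.le, hy.2.le⟩
      exact mul_le_mul_of_nonneg_left
        (pow_le_pow_left₀ (abs_nonneg y) hy' _)
        (mul_nonneg (mul_nonneg (Nat.cast_nonneg n) (Nat.cast_nonneg _))
          (mlc_pos hα hβ n).le))
    h0R (ml_summable_d1 hα hβ le_rfl) hxR

lemma mlF_pos (hα : 0 < α) (hβ : 0 < β) {x : ℝ} (hx : 0 ≤ x) : 0 < mlF α β x := by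
  refine Summable.tsum_pos (ml_summable hα hβ x)
    (fun n => mul_nonneg (mlc_pos hα hβ n).le (pow_nonneg hx n)) 0 ?_
  simpa using mlc_pos hα hβ 0

lemma mlF1_eq (hα : 0 < α) (hβ : 0 < β) {x : ℝ} (hx : 0 ≤ x) :
    mlF1 α β x = ∑' n : ℕ, ((n + 1 : ℕ):ℝ) * mlc α β (n + 1) * x ^ n := by
  rw [mlF1, Summable.tsum_eq_zero_add (ml_summable_d1 hα hβ hx)]
  simp

lemma mlF2_eq (hα : 0 < α) (hβ : 0 < β) {x : ℝ} (hx : 0 ≤ x) :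
    mlF2 α β x = ∑' n : ℕ, ((n + 2 : ℕ):ℝ) * ((n + 1 : ℕ):ℝ) * mlc α β (n + 2) * x ^ n := by
  rw [mlF2, Summable.tsum_eq_zero_add (ml_summable_d2 hα hβ hx),
    Summable.tsum_eq_zero_add ((summable_nat_add_iff 1).2 (ml_summable_d2 hα hβ hx))]
  simp only [Nat.cast_zero, zero_mul, Nat.zero_sub, Nat.cast_ofNat]
  norm_num
  exact tsum_congr fun b => by
    have e : b + 1 + 1 - 2 = b := by omega
    rw [e]; push_cast; ring_nf

noncomputable def mlWL (α β : ℝ) (M p : ℕ) : ℝ :=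
  ((M:ℝ) - p) * ((M:ℝ) - p - 1) * (mlc α β p * mlc α β (M - p))

noncomputable def mlG (α β : ℝ) (M p : ℕ) : ℝ :=
  (p:ℝ) * ((M:ℝ) - p) * (mlc α β p * mlc α β (M - p))

lemma ml_coef (hα : 0 < α) (hβ : 0 < β) (m : ℕ) :
    ∑ k ∈ range (m + 1), mlc α β k *
        (((m - k + 2 : ℕ):ℝ) * ((m - k + 1 : ℕ):ℝ) * mlc α β (m - k + 2))
      ≤ 2 * ∑ k ∈ range (m + 1),
        (((k + 1 : ℕ):ℝ) * mlc α β (k + 1)) * (((m - k + 1 : ℕ):ℝ) * mlc α β (m - k + 1)) := by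
  set M := m + 2 with hM
  have hcore := core_nonneg (mlc α β) (mlc_pos hα hβ) (mlc_step hα hβ) M
  have hL : ∑ k ∈ range (m + 1), mlc α β k *
        (((m - k + 2 : ℕ):ℝ) * ((m - k + 1 : ℕ):ℝ) * mlc α β (m - k + 2))
      = ∑ p ∈ range (M + 1), mlWL α β M p := by
    have e1 : ∀ k ∈ range (m + 1), mlc α β k *
        (((m - k + 2 : ℕ):ℝ) * ((m - k + 1 : ℕ):ℝ) * mlc α β (m - k + 2)) = mlWL α β M k := by
      intro k hk
      have hkm : k ≤ m := by rw [mem_range] at hk; omega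
      have e2 : m - k + 2 = M - k := by omega
      have e3 : m - k + 1 = M - k - 1 := by omega
      have c2 : ((M - k : ℕ):ℝ) = (M:ℝ) - k := by rw [Nat.cast_sub (by omega)]
      have c3 : ((M - k - 1 : ℕ):ℝ) = (M:ℝ) - k - 1 := by
        rw [show M - k - 1 = M - (k + 1) by omega, Nat.cast_sub (by omega)]
        push_cast; ring
      rw [e2, e3, c2, c3, mlWL]; ring
    have z1 : mlWL α β M (m + 1) = 0 := by rw [mlWL]; push_cast [hM]; ring
    have z2 : mlWL α β M (m + 1 + 1) = 0 := by rw [mlWL]; push_cast [hM]; ring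
    have hexp : ∑ p ∈ range (M + 1), mlWL α β M p
        = ∑ p ∈ range (m + 1), mlWL α β M p + mlWL α β M (m + 1) + mlWL α β M (m + 1 + 1) := by
      rw [show M + 1 = (m + 1) + 1 + 1 by omega, Finset.sum_range_succ, Finset.sum_range_succ]
    rw [Finset.sum_congr rfl e1, hexp, z1, z2]; ring
  have hR : ∑ k ∈ range (m + 1),
        (((k + 1 : ℕ):ℝ) * mlc α β (k + 1)) * (((m - k + 1 : ℕ):ℝ) * mlc α β (m - k + 1))
      = ∑ p ∈ range (M + 1), mlG α β M p := by
    have e1 : ∀ k ∈ range (m + 1),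
        (((k + 1 : ℕ):ℝ) * mlc α β (k + 1)) * (((m - k + 1 : ℕ):ℝ) * mlc α β (m - k + 1))
          = mlG α β M (k + 1) := by
      intro k hk
      have hkm : k ≤ m := by rw [mem_range] at hk; omega
      have e2 : m - k + 1 = M - (k + 1) := by omega
      have c2 : ((M - (k + 1) : ℕ):ℝ) = (M:ℝ) - ((k:ℝ) + 1) := by
        rw [Nat.cast_sub (by omega)]; push_cast; ring
      rw [e2, mlG, c2]; push_cast; ring
    rw [Finset.sum_congr rfl e1]
    have hs : ∑ k ∈ range (m + 2), mlG α β M k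
        = (∑ k ∈ range (m + 1), mlG α β M (k + 1)) + mlG α β M 0 :=
      Finset.sum_range_succ' (mlG α β M) (m + 1)
    have hs2 : ∑ k ∈ range (M + 1), mlG α β M k
        = ∑ k ∈ range (m + 2), mlG α β M k + mlG α β M (m + 2) :=
      Finset.sum_range_succ (mlG α β M) (m + 2)
    have z0 : mlG α β M 0 = 0 := by rw [mlG]; push_cast; ring
    have zM : mlG α β M (m + 2) = 0 := by rw [mlG]; push_cast [hM]; ring
    rw [hs2, hs, z0, zM]; ring
  have hsplit : ∑ p ∈ range (M + 1),
      (2 * (p:ℝ) * ((M:ℝ) - p) - ((M:ℝ) - p) * ((M:ℝ) - p - 1)) * (mlc α β p * mlc α β (M - p))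
      = 2 * (∑ p ∈ range (M + 1), mlG α β M p) - ∑ p ∈ range (M + 1), mlWL α β M p := by
    rw [Finset.mul_sum, ← Finset.sum_sub_distrib]
    refine Finset.sum_congr rfl fun p _ => ?_
    rw [mlG, mlWL]; ring
  rw [hL, hR]
  rw [hsplit] at hcore
  linarith

lemma ml_key (hα : 0 < α) (hβ : 0 < β) {x : ℝ} (hx : 0 ≤ x) :
    mlF α β x * mlF2 α β x ≤ 2 * (mlF1 α β x) ^ 2 := by
  have sa : Summable (fun n : ℕ => ‖mlc α β n * x ^ n‖) := by
    simpa only [Real.norm_eq_abs] using (ml_summable hα hβ x).abs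
  have hb : Summable (fun n : ℕ => ((n + 1 : ℕ):ℝ) * mlc α β (n + 1) * x ^ n) := by
    refine ((summable_nat_add_iff 1).2 (ml_summable_d1 hα hβ hx)).congr fun n => ?_
    simp
  have sb : Summable (fun n : ℕ => ‖((n + 1 : ℕ):ℝ) * mlc α β (n + 1) * x ^ n‖) := by
    simpa only [Real.norm_eq_abs] using hb.abs
  have he : Summable (fun n : ℕ => ((n + 2 : ℕ):ℝ) * ((n + 1 : ℕ):ℝ) * mlc α β (n + 2) * x ^ n) := by
    refine ((summable_nat_add_iff 2).2 (ml_summable_d2 hα hβ hx)).congr fun n => ?_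
    norm_num
  have se : Summable
      (fun n : ℕ => ‖((n + 2 : ℕ):ℝ) * ((n + 1 : ℕ):ℝ) * mlc α β (n + 2) * x ^ n‖) := by
    simpa only [Real.norm_eq_abs] using he.abs
  rw [show mlF α β x = ∑' n : ℕ, mlc α β n * x ^ n from rfl, mlF1_eq hα hβ hx,
    mlF2_eq hα hβ hx, sq, tsum_mul_tsum_eq_tsum_sum_antidiagonal_of_summable_norm sa se,
    tsum_mul_tsum_eq_tsum_sum_antidiagonal_of_summable_norm sb sb, ← tsum_mul_left]
  refine Summable.tsum_le_tsum (fun m => ?_)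
    ((summable_norm_sum_mul_antidiagonal_of_summable_norm sa se).of_norm)
    (((summable_norm_sum_mul_antidiagonal_of_summable_norm sb sb).of_norm).mul_left 2)
  rw [Finset.Nat.sum_antidiagonal_eq_sum_range_succ_mk,
    Finset.Nat.sum_antidiagonal_eq_sum_range_succ_mk]
  have hLcongr : ∀ k ∈ range (m + 1), (mlc α β k * x ^ k) *
      (((m - k + 2 : ℕ):ℝ) * ((m - k + 1 : ℕ):ℝ) * mlc α β (m - k + 2) * x ^ (m - k))
      = (mlc α β k * (((m - k + 2 : ℕ):ℝ) * ((m - k + 1 : ℕ):ℝ) * mlc α β (m - k + 2))) * x ^ m := by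
    intro k hk
    have hkm : k ≤ m := by rw [mem_range] at hk; omega
    rw [show x ^ m = x ^ k * x ^ (m - k) by rw [← pow_add, Nat.add_sub_cancel' hkm]]
    ring
  have hRcongr : ∀ k ∈ range (m + 1), (((k + 1 : ℕ):ℝ) * mlc α β (k + 1) * x ^ k) *
      (((m - k + 1 : ℕ):ℝ) * mlc α β (m - k + 1) * x ^ (m - k))
      = ((((k + 1 : ℕ):ℝ) * mlc α β (k + 1)) * (((m - k + 1 : ℕ):ℝ) * mlc α β (m - k + 1))) * x ^ m := by
    intro k hk
    have hkm : k ≤ m := by rw [mem_range] at hk; omega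
    rw [show x ^ m = x ^ k * x ^ (m - k) by rw [← pow_add, Nat.add_sub_cancel' hkm]]
    ring
  rw [Nat.succ_eq_add_one, Finset.sum_congr rfl hLcongr, Finset.sum_congr rfl hRcongr,
    ← Finset.sum_mul, ← Finset.sum_mul, ← mul_assoc]
  exact mul_le_mul_of_nonneg_right (ml_coef hα hβ m) (pow_nonneg hx m)

end ML

/-- The two-parameter Mittag-Leffler function `E_{α,β}(z) = ∑ z^n / Γ(β + αn)`. -/
noncomputable def mittagLeffler (α β z : ℝ) : ℝ :=
  ∑' n : ℕ, z ^ n / Real.Gamma (β + α * n)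

/-- Proposition 3: for every `α, β > 0`, `E_{α,β}` is positive on `[0,∞)` and
`x ↦ 1/E_{α,β}(x)` is convex on `[0,∞)`. -/
theorem mittagLeffler_reciprocal_convex (α β : ℝ) (hα : 0 < α) (hβ : 0 < β) :
    (∀ x : ℝ, 0 ≤ x → 0 < mittagLeffler α β x) ∧
    ConvexOn ℝ (Set.Ici (0 : ℝ)) (fun x => 1 / mittagLeffler α β x) := by
  have hEq : mittagLeffler α β = mlF α β := by
    funext x
    unfold mittagLeffler mlF mlc
    exact tsum_congr fun n => by rw [div_eq_mul_inv, mul_comm]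
  rw [hEq]
  constructor
  · exact fun x hx => mlF_pos hα hβ hx
  · have hFderiv : ∀ x : ℝ, 0 < x →
        HasDerivAt (fun y => 1 / mlF α β y) (-mlF1 α β x / (mlF α β x) ^ 2) x := by
      intro x hx
      have h := (hasDerivAt_const x (1:ℝ)).div (mlF_hasDeriv hα hβ x)
        (mlF_pos hα hβ hx.le).ne'
      refine h.congr_deriv ?_
      ring
    have hF1deriv : ∀ x : ℝ, 0 < x →
        HasDerivAt (fun y => -mlF1 α β y / (mlF α β y) ^ 2)
          ((2 * (mlF1 α β x) ^ 2 - mlF α β x * mlF2 α β x) / (mlF α β x) ^ 3) x := by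
      intro x hx
      have hfpos := mlF_pos hα hβ hx.le
      have h := ((mlF1_hasDeriv hα hβ x).neg).div ((mlF_hasDeriv hα hβ x).pow 2)
        (pow_pos hfpos 2).ne'
      refine h.congr_deriv ?_
      simp only [Pi.pow_apply, Pi.neg_apply]
      field_simp
      ring
    refine convexOn_of_deriv2_nonneg (convex_Ici 0) ?_ ?_ ?_ ?_
    · refine ContinuousOn.div continuousOn_const ?_ (fun x hx => (mlF_pos hα hβ hx).ne')
      exact Continuous.continuousOn (continuous_iff_continuousAt.2
        (fun x => (mlF_hasDeriv hα hβ x).continuousAt))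
    · rw [interior_Ici]
      exact fun x hx => ((hFderiv x hx).differentiableAt).differentiableWithinAt
    · rw [interior_Ici]
      refine DifferentiableOn.congr
        (fun x hx => ((hF1deriv x hx).differentiableAt).differentiableWithinAt)
        (fun x hx => (hFderiv x hx).deriv)
    · rw [interior_Ici]
      intro x hx
      have hx' : (0:ℝ) < x := hx
      have hev : deriv (fun y => 1 / mlF α β y)
          =ᶠ[nhds x] (fun y => -mlF1 α β y / (mlF α β y) ^ 2) := by
        filter_upwards [isOpen_Ioi.mem_nhds hx'] with y hy
        exact (hFderiv y hy).deriv
      have e2 : deriv^[2] (fun y => 1 / mlF α β y) x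
          = deriv (deriv (fun y => 1 / mlF α β y)) x := rfl
      rw [e2, hev.deriv_eq, (hF1deriv x hx').deriv]
      have hkey := ml_key hα hβ hx'.le
      have hfpos := mlF_pos hα hβ hx'.le
      apply div_nonneg (by linarith) (by positivity)
end

section
/- For every α > 0 and β > 0, the sequence u_n = (Γ(β + α(n+1)) / (n+1)) · ∑_{k=0}^n 1/(Γ(β + αk) · Γ(β + α(n−k))), n ≥ 0, is non-decreasing: u_n ≥ u_{n−1} for every n ≥ 1. -/
/-- Cross inequality for the Gamma function, from log-convexity:
for `0 < x ≤ y` and `0 < a`, `Γ(x+a)Γ(y) ≤ Γ(x)Γ(y+a)`. -/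
lemma gamma_cross {a x y : ℝ} (ha : 0 < a) (hx : 0 < x) (hxy : x ≤ y) :
    Real.Gamma (x + a) * Real.Gamma y ≤ Real.Gamma x * Real.Gamma (y + a) := by
  rcases eq_or_lt_of_le hxy with rfl | hlt
  · rw [mul_comm]
  · have hy : 0 < y := hx.trans hlt
    have hden : 0 < y + a - x := by linarith
    set s : ℝ := (y - x) / (y + a - x) with hs
    set t : ℝ := a / (y + a - x) with ht
    have hs0 : 0 ≤ s := div_nonneg (by linarith) hden.le
    have ht0 : 0 ≤ t := by positivity
    have hst : s + t = 1 := by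
      rw [hs, ht, ← add_div, div_eq_one_iff_eq hden.ne']; ring
    have hconv := Real.convexOn_log_Gamma
    have hxm : x ∈ Set.Ioi (0:ℝ) := hx
    have hym : y + a ∈ Set.Ioi (0:ℝ) := by simp; linarith
    have h1 : (Real.log ∘ Real.Gamma) (x + a) ≤
        s * (Real.log ∘ Real.Gamma) x + t * (Real.log ∘ Real.Gamma) (y + a) := by
      have := hconv.2 hxm hym hs0 ht0 hst
      have he : s • x + t • (y + a) = x + a := by
        simp only [smul_eq_mul, hs, ht]; field_simp; ring
      rwa [he, smul_eq_mul, smul_eq_mul] at this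
    have h2 : (Real.log ∘ Real.Gamma) y ≤
        t * (Real.log ∘ Real.Gamma) x + s * (Real.log ∘ Real.Gamma) (y + a) := by
      have := hconv.2 hxm hym ht0 hs0 (by linarith)
      have he : t • x + s • (y + a) = y := by
        simp only [smul_eq_mul, hs, ht]; field_simp; ring
      rwa [he, smul_eq_mul, smul_eq_mul] at this
    have hlog : Real.log (Real.Gamma (x + a)) + Real.log (Real.Gamma y) ≤
        Real.log (Real.Gamma x) + Real.log (Real.Gamma (y + a)) := by
      simp only [Function.comp_apply] at h1 h2
      have h3 := add_le_add h1 h2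
      have h4 : s * Real.log (Real.Gamma x) + t * Real.log (Real.Gamma (y + a)) +
          (t * Real.log (Real.Gamma x) + s * Real.log (Real.Gamma (y + a))) =
          (s + t) * (Real.log (Real.Gamma x) + Real.log (Real.Gamma (y + a))) := by ring
      rw [hst, one_mul] at h4
      linarith
    have g1 : 0 < Real.Gamma (x + a) := Real.Gamma_pos_of_pos (by linarith)
    have g2 : 0 < Real.Gamma y := Real.Gamma_pos_of_pos hy
    have g3 : 0 < Real.Gamma x := Real.Gamma_pos_of_pos hx
    have g4 : 0 < Real.Gamma (y + a) := Real.Gamma_pos_of_pos (by linarith)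
    have := Real.exp_le_exp.mpr hlog
    rwa [Real.exp_add, Real.exp_add, Real.exp_log g1, Real.exp_log g2,
      Real.exp_log g3, Real.exp_log g4] at this

/-- The sequence `u_n = (Γ(β + α(n+1))/(n+1)) ∑_{k=0}^n 1/(Γ(β+αk)Γ(β+α(n-k)))`
is non-decreasing for all `α, β > 0`. -/
theorem u_seq_monotone (α β : ℝ) (hα : 0 < α) (hβ : 0 < β) :
    Monotone (fun n : ℕ =>
      (Real.Gamma (β + α * ((n : ℝ) + 1)) / ((n : ℝ) + 1)) *
        ∑ k ∈ Finset.range (n + 1),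
          1 / (Real.Gamma (β + α * (k : ℝ)) * Real.Gamma (β + α * ((n : ℝ) - (k : ℝ))))) := by
  set g : ℕ → ℝ := fun m => Real.Gamma (β + α * m) with hgdef
  have hg : ∀ m : ℕ, 0 < g m := fun m => Real.Gamma_pos_of_pos (by positivity)
  -- key cross inequality in terms of g
  have key : ∀ i j : ℕ, i ≤ j → g (i+1) * g j ≤ g i * g (j+1) := by
    intro i j hij
    have h := gamma_cross (a := α) (x := β + α * i) (y := β + α * j) hα (by positivity)
      (by nlinarith [(Nat.cast_le (α := ℝ)).mpr hij])
    have e1 : β + α * ((i+1 : ℕ) : ℝ) = β + α * i + α := by push_cast; ring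
    have e2 : β + α * ((j+1 : ℕ) : ℝ) = β + α * j + α := by push_cast; ring
    simp only [hgdef, e1, e2]
    exact h
  set S : ℕ → ℝ := fun n => ∑ k ∈ Finset.range (n+1), 1 / (g k * g (n - k)) with hSdef
  set c : ℕ → ℕ → ℝ := fun m k => g (m+1) / (g k * g (m - k)) with hcdef
  -- c is monotone in first argument (two versions)
  have hc1 : ∀ n k : ℕ, k ≤ n → c n k ≤ c (n+1) k := by
    intro n k hk
    have hkey := key (n - k) (n + 1) (by omega)
    have e : n - k + 1 = n + 1 - k := by omega
    rw [e] at hkey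
    rw [hcdef]
    rw [div_le_div_iff₀ (by positivity) (by positivity)]
    nlinarith [mul_le_mul_of_nonneg_left hkey (hg k).le, hg k, hg (n+1-k), hg (n-k),
      hg (n+1), hg (n+2)]
  have hc2 : ∀ n k : ℕ, 1 ≤ k → k ≤ n + 1 → c n (k - 1) ≤ c (n+1) k := by
    intro n k hk1 hk2
    have hkey := key (k - 1) (n + 1) (by omega)
    have e : k - 1 + 1 = k := by omega
    rw [e] at hkey
    have e2 : n - (k - 1) = n + 1 - k := by omega
    rw [hcdef]
    simp only [e2]
    rw [div_le_div_iff₀ (by positivity) (by positivity)]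
    nlinarith [mul_le_mul_of_nonneg_left hkey (hg (n+1-k)).le, hg (n+1-k)]
  -- the main inequality for S and g
  have hmain : ∀ n : ℕ,
      g (n+1) / ((n:ℝ)+1) * S n ≤ g (n+2) / ((n:ℝ)+2) * S (n+1) := by
    intro n
    rw [div_mul_eq_mul_div, div_mul_eq_mul_div,
      div_le_div_iff₀ (by positivity) (by positivity)]
    -- LHS
    have eL : g (n+1) * S n * ((n:ℝ)+2) =
        ∑ k ∈ Finset.range (n+1), ((n:ℝ)+2) * c n k := by
      rw [hSdef, Finset.mul_sum, Finset.sum_mul]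
      refine Finset.sum_congr rfl fun k _ => ?_
      rw [hcdef]; ring
    have eR : g (n+2) * S (n+1) * ((n:ℝ)+1) =
        ∑ k ∈ Finset.range (n+2), ((n:ℝ)+1) * c (n+1) k := by
      rw [hSdef, Finset.mul_sum, Finset.sum_mul]
      refine Finset.sum_congr rfl fun k _ => ?_
      rw [hcdef]; ring
    rw [eL, eR]
    -- split LHS coefficients
    have split : ∀ k ∈ Finset.range (n+1),
        ((n:ℝ)+2) * c n k = ((n+1-k : ℕ) : ℝ) * c n k + ((k:ℝ)+1) * c n k := by
      intro k hk
      have hk' : k ≤ n := Nat.lt_succ_iff.mp (Finset.mem_range.mp hk)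
      have : ((n+1-k : ℕ) : ℝ) = (n:ℝ) + 1 - k := by
        rw [Nat.cast_sub (by omega)]; push_cast; ring
      rw [this]; ring
    rw [Finset.sum_congr rfl split, Finset.sum_add_distrib]
    -- first sum extends to range (n+2) with zero extra term
    have e1 : ∑ k ∈ Finset.range (n+1), ((n+1-k : ℕ) : ℝ) * c n k =
        ∑ k ∈ Finset.range (n+2), ((n+1-k : ℕ) : ℝ) * c n k := by
      rw [Finset.sum_range_succ (f := fun k => ((n+1-k : ℕ) : ℝ) * c n k) (n+1)]
      simp
    -- second sum reindexes
    have e2 : ∑ k ∈ Finset.range (n+1), ((k:ℝ)+1) * c n k =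
        ∑ k ∈ Finset.range (n+2), (k:ℝ) * c n (k - 1) := by
      rw [Finset.sum_range_succ' (f := fun k => (k:ℝ) * c n (k - 1)) (n+1)]
      simp only [Nat.cast_zero, zero_mul, add_zero, Nat.add_sub_cancel]
      refine Finset.sum_congr rfl fun k _ => ?_
      push_cast; ring
    rw [e1, e2, ← Finset.sum_add_distrib]
    refine Finset.sum_le_sum fun k hk => ?_
    have hk' : k ≤ n + 1 := Nat.lt_succ_iff.mp (Finset.mem_range.mp hk)
    have hA : ((n+1-k : ℕ) : ℝ) * c n k ≤ ((n+1-k : ℕ) : ℝ) * c (n+1) k := by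
      rcases Nat.lt_or_ge k (n+1) with h | h
      · exact mul_le_mul_of_nonneg_left (hc1 n k (by omega)) (by positivity)
      · have : k = n + 1 := by omega
        subst this
        simp
    have hB : (k:ℝ) * c n (k - 1) ≤ (k:ℝ) * c (n+1) k := by
      rcases Nat.eq_zero_or_pos k with h | h
      · subst h; simp
      · exact mul_le_mul_of_nonneg_left (hc2 n k h hk') (by positivity)
    have hw : ((n+1-k : ℕ) : ℝ) + (k:ℝ) = (n:ℝ) + 1 := by
      rw [Nat.cast_sub (by omega)]; push_cast; ring
    calc ((n+1-k : ℕ) : ℝ) * c n k + (k:ℝ) * c n (k - 1)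
        ≤ ((n+1-k : ℕ) : ℝ) * c (n+1) k + (k:ℝ) * c (n+1) k := add_le_add hA hB
      _ = (((n+1-k : ℕ) : ℝ) + (k:ℝ)) * c (n+1) k := by ring
      _ = ((n:ℝ)+1) * c (n+1) k := by rw [hw]
  -- bridge to the original statement
  apply monotone_nat_of_le_succ
  intro n
  have hS : ∀ m : ℕ, (∑ k ∈ Finset.range (m + 1),
      1 / (Real.Gamma (β + α * (k : ℝ)) * Real.Gamma (β + α * ((m : ℝ) - (k : ℝ))))) = S m := by
    intro m
    refine Finset.sum_congr rfl fun k hk => ?_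
    have hk' : k ≤ m := Nat.lt_succ_iff.mp (Finset.mem_range.mp hk)
    have : (m:ℝ) - (k:ℝ) = ((m - k : ℕ) : ℝ) := (Nat.cast_sub hk').symm
    rw [this]
  rw [hS n, hS (n+1)]
  have eg1 : Real.Gamma (β + α * ((n:ℝ) + 1)) = g (n+1) := by
    simp only [hgdef]; push_cast; ring_nf
  have eg2 : Real.Gamma (β + α * (((n+1 : ℕ):ℝ) + 1)) = g (n+2) := by
    simp only [hgdef]; push_cast; ring_nf
  have ed : ((n+1 : ℕ):ℝ) + 1 = (n:ℝ) + 2 := by push_cast; ring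
  rw [eg1, eg2, ed]
  exact hmain n
end
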